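/- arXiv:0906.4770 — 3 statements merged into one kernel-verified Lean document; each statement's English description precedes it below -/
import Mathlib

section
/- There exists a constant C < ∞ such that for all 0 < δ < 1 and all h ∈ ℝ: sup_{δ≤r≤1} p_r(0) ≤ C·max(ψ⁻¹(1/δ), 1), sup_{δ≤r≤1} |Δ^h p_r(0)| ≤ C·h²/δ³, and sup_{δ≤r≤1} |Δ^hΔ^{−h} p_r(0)| ≤ C·h²/δ³. -/
noncomputable def pdens (ψ : ℝ → ℝ) (s x : ℝ) : ℝ :=
  (1 / Real.pi) * ∫ p in Set.Ioi (0:ℝ), Real.cos (p * x) * Real.exp (-s * ψ p)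

noncomputable def psiInv (ψ : ℝ → ℝ) (u : ℝ) : ℝ :=
  sInf {l : ℝ | 0 < l ∧ u ≤ ψ l}

open Real MeasureTheory Set Filter

lemma expint_Ioi (a T : ℝ) (ha : 0 < a) :
    ∫ x in Set.Ioi T, Real.exp (-(a * x)) = Real.exp (-(a * T)) / a := by
  have hderiv : ∀ x ∈ Set.Ici T,
      HasDerivAt (fun x => -Real.exp (-(a * x)) / a) (Real.exp (-(a * x))) x := by
    intro x _
    have h1 : HasDerivAt (fun x : ℝ => -(a * x)) (-a) x := by
      have := ((hasDerivAt_id x).const_mul a).neg; simp only [mul_one] at this; exact this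
    have h2 := (h1.exp).neg.div_const a
    refine HasDerivAt.congr_deriv h2 ?_
    field_simp
  have hint : MeasureTheory.IntegrableOn (fun x => Real.exp (-(a * x))) (Set.Ioi T) := by
    simpa [neg_mul] using exp_neg_integrableOn_Ioi T ha
  have htend : Filter.Tendsto (fun x : ℝ => -Real.exp (-(a * x)) / a) Filter.atTop (nhds 0) := by
    have h0 : Filter.Tendsto (fun x : ℝ => -(a * x)) Filter.atTop Filter.atBot := by
      simpa [neg_mul] using (tendsto_id.const_mul_atTop_of_neg (neg_neg_iff_pos.2 ha) :
        Filter.Tendsto (fun x : ℝ => -a * x) Filter.atTop Filter.atBot)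
    have := (Real.tendsto_exp_atBot.comp h0).neg.div_const a
    simpa using this
  have := MeasureTheory.integral_Ioi_of_hasDerivAt_of_tendsto' hderiv hint htend
  rw [this]
  field_simp
  ring

lemma comp_lemma (ψ : ℝ → ℝ) (D₁ : ℝ)
    (hpos : ∀ p : ℝ, p ≠ 0 → 0 < ψ p)
    (hdiff1 : ∀ p : ℝ, 0 < p → DifferentiableAt ℝ ψ p)
    (hD1 : ∀ l : ℝ, 1 ≤ l → l * |deriv ψ l| ≤ D₁ * ψ l)
    {a b : ℝ} (ha : 1 ≤ a) (hab : a ≤ b) (hb2 : b ≤ 2 * a) :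
    ψ a ≤ Real.exp D₁ * ψ b := by
  have hψ : ∀ x : ℝ, 1 ≤ x → 0 < ψ x := fun x hx => hpos x (by linarith)
  have hD₁ : 0 ≤ D₁ := by
    have h1 := hD1 1 le_rfl
    have h2 := hψ 1 le_rfl
    nlinarith [abs_nonneg (deriv ψ 1)]
  have key : ∀ x ∈ Set.Icc a b, HasDerivWithinAt (fun y => Real.log (ψ y))
      (deriv ψ x / ψ x) (Set.Icc a b) x := by
    intro x hx
    have hx1 : 1 ≤ x := le_trans ha hx.1
    exact (((hdiff1 x (by linarith)).hasDerivAt).log (hψ x hx1).ne').hasDerivWithinAt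
  have bound : ∀ x ∈ Set.Icc a b, ‖deriv ψ x / ψ x‖ ≤ D₁ / a := by
    intro x hx
    have hx1 : 1 ≤ x := le_trans ha hx.1
    have hψx := hψ x hx1
    have h1 := hD1 x hx1
    rw [Real.norm_eq_abs, abs_div, abs_of_pos hψx]
    rw [div_le_div_iff₀ hψx (by linarith : (0:ℝ) < a)]
    nlinarith [abs_nonneg (deriv ψ x), hx.1, hx.2]
  have hmvt := Convex.norm_image_sub_le_of_norm_hasDerivWithin_le key bound (convex_Icc a b)
    (Set.right_mem_Icc.2 hab) (Set.left_mem_Icc.2 hab)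
  rw [Real.norm_eq_abs, Real.norm_eq_abs] at hmvt
  have h2 : Real.log (ψ a) - Real.log (ψ b) ≤ D₁ := by
    have h3 : |a - b| = b - a := by rw [abs_sub_comm]; exact abs_of_nonneg (by linarith)
    have h4 : D₁ / a * (b - a) ≤ D₁ := by
      rw [div_mul_eq_mul_div, div_le_iff₀ (by linarith : (0:ℝ) < a)]
      nlinarith
    calc Real.log (ψ a) - Real.log (ψ b) ≤ |Real.log (ψ a) - Real.log (ψ b)| := le_abs_self _
      _ ≤ D₁ / a * |a - b| := hmvt
      _ = D₁ / a * (b - a) := by rw [h3]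
      _ ≤ D₁ := h4
  have hψa := hψ a ha
  have hψb := hψ b (le_trans ha hab)
  calc ψ a = Real.exp (Real.log (ψ a)) := (Real.exp_log hψa).symm
    _ ≤ Real.exp (D₁ + Real.log (ψ b)) := Real.exp_le_exp.2 (by linarith)
    _ = Real.exp D₁ * ψ b := by rw [Real.exp_add, Real.exp_log hψb]

lemma potter_lemma (ψ : ℝ → ℝ) (D₁ x₀ : ℝ)
    (hpos : ∀ p : ℝ, p ≠ 0 → 0 < ψ p)
    (hdiff1 : ∀ p : ℝ, 0 < p → DifferentiableAt ℝ ψ p)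
    (hD1 : ∀ l : ℝ, 1 ≤ l → l * |deriv ψ l| ≤ D₁ * ψ l)
    (hx₀ : 1 ≤ x₀) (hdouble : ∀ x : ℝ, x₀ ≤ x → 2 * ψ x ≤ ψ (2 * x)) :
    ∀ x p : ℝ, x₀ ≤ x → x ≤ p → p / x * ψ x ≤ 2 * Real.exp D₁ * ψ p := by
  intro x p hx hxp
  have hx1 : 1 ≤ x := le_trans hx₀ hx
  have hx0 : (0:ℝ) < x := by linarith
  have hexp1 : 1 ≤ Real.exp D₁ := by
    have hψ1 : 0 < ψ 1 := hpos 1 one_ne_zero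
    have h1 := hD1 1 le_rfl
    have : 0 ≤ D₁ := by nlinarith [abs_nonneg (deriv ψ 1)]
    simpa using Real.exp_le_exp.2 this
  have key : ∀ n : ℕ, ∀ q : ℝ, x ≤ q → q ≤ x * 2 ^ (n + 1) →
      q / x * ψ x ≤ 2 * Real.exp D₁ * ψ q := by
    intro n
    induction n with
    | zero =>
      intro q hq1 hq2
      have hq2' : q ≤ 2 * x := by rw [pow_one] at hq2; linarith
      have hcomp := comp_lemma ψ D₁ hpos hdiff1 hD1 hx1 hq1 hq2'
      have hqx : q / x ≤ 2 := by rw [div_le_iff₀ hx0]; linarith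
      have hψx : 0 < ψ x := hpos x hx0.ne'
      calc q / x * ψ x ≤ 2 * ψ x := by nlinarith [div_nonneg (le_trans hx0.le hq1) hx0.le]
        _ ≤ 2 * (Real.exp D₁ * ψ q) := by nlinarith
        _ = 2 * Real.exp D₁ * ψ q := by ring
    | succ n ih =>
      intro q hq1 hq2
      by_cases hc : q ≤ x * 2 ^ (n + 1)
      · exact ih q hq1 hc
      · push_neg at hc
        have h2n : (1:ℝ) ≤ 2 ^ (n + 1) := one_le_pow₀ (by norm_num)
        have hpow : (2:ℝ) ^ (n + 1 + 1) = 2 * (2:ℝ) ^ (n + 1) := by ring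
        have h2n2 : (2:ℝ) ≤ 2 ^ (n + 1) := by
          calc (2:ℝ) = 2 ^ 1 := by norm_num
            _ ≤ 2 ^ (n + 1) := pow_le_pow_right₀ (by norm_num) (by omega)
        have hq1' : x ≤ q / 2 := by nlinarith [mul_le_mul_of_nonneg_left h2n2 hx0.le]
        have hq2' : q / 2 ≤ x * 2 ^ (n + 1) := by nlinarith
        have ihq := ih (q / 2) hq1' hq2'
        have hd := hdouble (q / 2) (le_trans hx hq1')
        have h2q : 2 * (q / 2) = q := by ring
        rw [h2q] at hd
        calc q / x * ψ x = 2 * (q / 2 / x * ψ x) := by ring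
          _ ≤ 2 * (2 * Real.exp D₁ * ψ (q / 2)) := by linarith
          _ = 2 * Real.exp D₁ * (2 * ψ (q / 2)) := by ring
          _ ≤ 2 * Real.exp D₁ * ψ q := by nlinarith [Real.exp_pos D₁]
  obtain ⟨n, hn⟩ := pow_unbounded_of_one_lt (p / x) (one_lt_two (α := ℝ))
  refine key n p hxp ?_
  have h1 : (2:ℝ) ^ n ≤ 2 ^ (n + 1) := by
    have : (0:ℝ) < 2 ^ n := by positivity
    calc (2:ℝ) ^ n = 2 ^ n * 1 := by ring
      _ ≤ 2 ^ n * 2 := by linarith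
      _ = 2 ^ (n + 1) := by ring
  have h2 : p / x ≤ 2 ^ (n + 1) := le_trans hn.le h1
  rw [div_le_iff₀ hx0] at h2
  linarith

lemma sq_exp_bound (b p : ℝ) (hb : 0 < b) (hp : 0 ≤ p) :
    p ^ 2 * Real.exp (-(b * p)) ≤ 16 / b ^ 2 * Real.exp (-(b / 2 * p)) := by
  set u := b / 2 * p with hu_def
  have hu : 0 ≤ u := by positivity
  have e1 : Real.exp (-(b * p)) = Real.exp (-u) * Real.exp (-u) := by
    rw [← Real.exp_add]
    congr 1
    rw [hu_def]; ring
  have hexpu : Real.exp (u / 2) * Real.exp (u / 2) = Real.exp u := by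
    rw [← Real.exp_add]; congr 1; ring
  have h2 : u / 2 + 1 ≤ Real.exp (u / 2) := Real.add_one_le_exp _
  have e2 : u ^ 2 ≤ 4 * Real.exp u := by nlinarith [Real.exp_pos (u / 2)]
  have hprod : Real.exp (-u) * Real.exp u = 1 := by rw [← Real.exp_add]; simp
  have e3 : u ^ 2 * Real.exp (-u) ≤ 4 := by
    nlinarith [mul_le_mul_of_nonneg_right e2 (Real.exp_pos (-u)).le]
  have hp2 : p ^ 2 = 4 / b ^ 2 * u ^ 2 := by
    rw [hu_def]; field_simp; ring
  calc p ^ 2 * Real.exp (-(b * p)) = 4 / b ^ 2 * (u ^ 2 * Real.exp (-u)) * Real.exp (-u) := by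
        rw [e1, hp2]; ring
    _ ≤ 4 / b ^ 2 * 4 * Real.exp (-u) := by
        have h4 := (Real.exp_pos (-u)).le
        have hb2 : (0:ℝ) ≤ 4 / b ^ 2 := by positivity
        nlinarith [mul_le_mul_of_nonneg_right (mul_le_mul_of_nonneg_left e3 hb2) h4]
    _ = 16 / b ^ 2 * Real.exp (-(b / 2 * p)) := by rw [← hu_def]; ring
set_option maxHeartbeats 1600000 in
theorem stmt_13
    (β : ℝ) (hβ1 : 1 < β) (hβ2 : β ≤ 2)
    (ψ : ℝ → ℝ)
    (hmeas : Measurable ψ)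
    (heven : ∀ p : ℝ, ψ (-p) = ψ p)
    (hnonneg : ∀ p : ℝ, 0 ≤ ψ p)
    (hpos : ∀ p : ℝ, p ≠ 0 → 0 < ψ p)
    (hRV : ∀ l : ℝ, 0 < l →
      Filter.Tendsto (fun x => ψ (l * x) / ψ x) Filter.atTop (nhds (l ^ β)))
    (hdiff1 : ∀ p : ℝ, 0 < p → DifferentiableAt ℝ ψ p)
    (hdiff2 : ∀ p : ℝ, 0 < p → DifferentiableAt ℝ (deriv ψ) p)
    (D₁ D₂ : ℝ)
    (hD1 : ∀ l : ℝ, 1 ≤ l → l * |deriv ψ l| ≤ D₁ * ψ l)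
    (hD2 : ∀ l : ℝ, 1 ≤ l → l ^ 2 * |deriv (deriv ψ) l| ≤ D₂ * ψ l)
    (hint1 : MeasureTheory.IntegrableOn (fun l : ℝ => (deriv ψ l) ^ 2) (Set.Ioc (0:ℝ) 1))
    (hint2 : MeasureTheory.IntegrableOn (fun l : ℝ => |deriv (deriv ψ) l|) (Set.Ioc (0:ℝ) 1))
    (hint3 : MeasureTheory.IntegrableOn (fun l : ℝ => ψ l / l) (Set.Ioc (0:ℝ) 1))
    (C₀ : ℝ) (hC0 : ∀ p : ℝ, ψ p ≤ C₀ * p ^ 2)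
    (hliminf : 0 < Filter.liminf (fun p : ℝ => ψ p / p ^ 2) (nhdsWithin (0:ℝ) ({0}ᶜ))) :
    ∃ C : ℝ, ∀ δ : ℝ, 0 < δ → δ < 1 → ∀ h : ℝ, ∀ r : ℝ, δ ≤ r → r ≤ 1 →
      pdens ψ r 0 ≤ C * max (psiInv ψ (1 / δ)) 1 ∧
      |pdens ψ r (0 + h) - pdens ψ r 0| ≤ C * h ^ 2 / δ ^ 3 ∧
      |2 * pdens ψ r 0 - pdens ψ r (0 + h) - pdens ψ r (0 - h)| ≤ C * h ^ 2 / δ ^ 3 := by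
  have hπ : (0:ℝ) < Real.pi := Real.pi_pos
  have hπ1 : (1:ℝ) ≤ Real.pi := by linarith [Real.pi_gt_three]
  have hψ1 : 0 < ψ 1 := hpos 1 one_ne_zero
  have hC₀pos : 0 < C₀ := by have := hC0 1; nlinarith
  have hD₁0 : 0 ≤ D₁ := by
    have := hD1 1 le_rfl
    nlinarith [abs_nonneg (deriv ψ 1)]
  -- doubling point
  obtain ⟨x₁, hx₁⟩ : ∃ x₁ : ℝ, ∀ x : ℝ, x₁ ≤ x → 2 ≤ ψ (2 * x) / ψ x := by
    have h2 := hRV 2 two_pos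
    have h2β : (2:ℝ) < 2 ^ β := by
      nth_rewrite 1 [← Real.rpow_one 2]
      exact Real.rpow_lt_rpow_of_exponent_lt one_lt_two hβ1
    have hev : ∀ᶠ x in Filter.atTop, 2 ≤ ψ (2 * x) / ψ x :=
      h2.eventually (eventually_ge_nhds h2β)
    exact Filter.eventually_atTop.mp hev
  set x₀ : ℝ := max x₁ 1 with hx₀def
  have hx₀1 : 1 ≤ x₀ := le_max_right _ _
  have hx₀0 : (0:ℝ) < x₀ := by linarith
  have hdouble : ∀ x : ℝ, x₀ ≤ x → 2 * ψ x ≤ ψ (2 * x) := by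
    intro x hx
    have hx0 : (0:ℝ) < x := lt_of_lt_of_le hx₀0 hx
    have hxpos : 0 < ψ x := hpos x hx0.ne'
    have hh := hx₁ x (le_trans (le_max_left _ _) hx)
    rw [le_div_iff₀ hxpos] at hh
    linarith
  have hPot := potter_lemma ψ D₁ x₀ hpos hdiff1 hD1 hx₀1 hdouble
  set E : ℝ := 2 * Real.exp D₁ with hEdef
  have hexp1 : (1:ℝ) ≤ Real.exp D₁ := by simpa using Real.exp_le_exp.2 hD₁0
  have hE2 : (2:ℝ) ≤ E := by rw [hEdef]; linarith
  have hE0 : (0:ℝ) < E := by linarith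
  have hψx₀ : 0 < ψ x₀ := hpos x₀ hx₀0.ne'
  set c₂ : ℝ := ψ x₀ / (E * x₀) with hc₂def
  have hc₂ : 0 < c₂ := by positivity
  have hlin : ∀ p : ℝ, x₀ ≤ p → c₂ * p ≤ ψ p := by
    intro p hp
    have hh := hPot x₀ p le_rfl hp
    have heq : c₂ * p = p / x₀ * ψ x₀ / E := by
      rw [hc₂def]; field_simp
    rw [heq, div_le_iff₀ hE0]
    linarith [hh, mul_comm (ψ p) E]
  clear_value x₀ E c₂
  -- integrability
  have hintgen : ∀ s : ℝ, 0 < s → MeasureTheory.IntegrableOn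
      (fun p => (1 + p ^ 2) * Real.exp (-(s * ψ p))) (Set.Ioi 0) := by
    intro s hs
    have hb : 0 < s * c₂ := by positivity
    have hmeasf : Measurable fun p : ℝ => (1 + p ^ 2) * Real.exp (-(s * ψ p)) :=
      (measurable_const.add (measurable_id.pow_const 2)).mul ((measurable_const.mul hmeas).neg.exp)
    rw [← Set.Ioc_union_Ioi_eq_Ioi hx₀0.le, MeasureTheory.integrableOn_union]
    constructor
    · refine MeasureTheory.Integrable.mono' (g := fun _ => 1 + x₀ ^ 2)
        (MeasureTheory.integrableOn_const measure_Ioc_lt_top.ne)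
        hmeasf.aestronglyMeasurable ?_
      refine (MeasureTheory.ae_restrict_iff' measurableSet_Ioc).2 (Filter.Eventually.of_forall ?_)
      intro p hp
      have hp0 : 0 < p := hp.1
      have hple : p ≤ x₀ := hp.2
      have hexp : Real.exp (-(s * ψ p)) ≤ 1 := by
        rw [Real.exp_le_one_iff]
        have := mul_nonneg hs.le (hnonneg p)
        linarith
      rw [Real.norm_eq_abs, abs_of_nonneg (by positivity)]
      show (1 + p ^ 2) * Real.exp (-(s * ψ p)) ≤ 1 + x₀ ^ 2
      have hpp : p ^ 2 ≤ x₀ ^ 2 := by nlinarith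
      calc (1 + p ^ 2) * Real.exp (-(s * ψ p)) ≤ (1 + p ^ 2) * 1 :=
            mul_le_mul_of_nonneg_left hexp (by positivity)
        _ = 1 + p ^ 2 := mul_one _
        _ ≤ 1 + x₀ ^ 2 := by linarith
    · have hint1' : MeasureTheory.IntegrableOn
          (fun p : ℝ => Real.exp (-(s * c₂ / 2 * p))) (Set.Ioi x₀) := by
        simpa [neg_mul] using exp_neg_integrableOn_Ioi x₀ (show 0 < s * c₂ / 2 by positivity)
      refine MeasureTheory.Integrable.mono'
        (g := fun p => (1 + 16 / (s * c₂) ^ 2) * Real.exp (-(s * c₂ / 2 * p)))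
        (hint1'.const_mul _) hmeasf.aestronglyMeasurable ?_
      refine (MeasureTheory.ae_restrict_iff' measurableSet_Ioi).2 (Filter.Eventually.of_forall ?_)
      intro p hp
      have hpx : x₀ ≤ p := le_of_lt hp
      have hp0 : 0 < p := lt_of_lt_of_le hx₀0 hpx
      have hlinp := hlin p hpx
      have h1 : Real.exp (-(s * ψ p)) ≤ Real.exp (-(s * c₂ * p)) := by
        apply Real.exp_le_exp.2
        have := mul_le_mul_of_nonneg_left hlinp hs.le
        linarith [mul_assoc s c₂ p]
      have h2 : Real.exp (-(s * c₂ * p)) ≤ Real.exp (-(s * c₂ / 2 * p)) := by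
        apply Real.exp_le_exp.2
        have h0 : 0 ≤ s * c₂ * p := mul_nonneg (mul_nonneg hs.le hc₂.le) hp0.le
        have he : s * c₂ / 2 * p = s * c₂ * p / 2 := by ring
        linarith
      have h3 := sq_exp_bound (s * c₂) p hb hp0.le
      have h4 : p ^ 2 * Real.exp (-(s * ψ p)) ≤ p ^ 2 * Real.exp (-(s * c₂ * p)) :=
        mul_le_mul_of_nonneg_left h1 (sq_nonneg p)
      rw [Real.norm_eq_abs, abs_of_nonneg (by positivity)]
      show (1 + p ^ 2) * Real.exp (-(s * ψ p)) ≤ (1 + 16 / (s * c₂) ^ 2) * Real.exp (-(s * c₂ / 2 * p))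
      calc (1 + p ^ 2) * Real.exp (-(s * ψ p)) =
            Real.exp (-(s * ψ p)) + p ^ 2 * Real.exp (-(s * ψ p)) := by ring
        _ ≤ Real.exp (-(s * c₂ / 2 * p)) + 16 / (s * c₂) ^ 2 * Real.exp (-(s * c₂ / 2 * p)) :=
            add_le_add (le_trans h1 h2) (le_trans h4 h3)
        _ = (1 + 16 / (s * c₂) ^ 2) * Real.exp (-(s * c₂ / 2 * p)) := by ring
  have hmeas_exp : ∀ s : ℝ, Measurable (fun p => Real.exp (-(s * ψ p))) :=
    fun s => ((measurable_const.mul hmeas).neg).exp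
  have hint_exp : ∀ s : ℝ, 0 < s →
      MeasureTheory.IntegrableOn (fun p => Real.exp (-(s * ψ p))) (Set.Ioi 0) := by
    intro s hs
    refine MeasureTheory.Integrable.mono' (hintgen s hs)
      (hmeas_exp s).aestronglyMeasurable (Filter.Eventually.of_forall fun p => ?_)
    rw [Real.norm_eq_abs, abs_of_nonneg (Real.exp_pos _).le]
    exact le_mul_of_one_le_left (Real.exp_pos _).le (by linarith [sq_nonneg p])
  have hint_p2 : ∀ s : ℝ, 0 < s →
      MeasureTheory.IntegrableOn (fun p => p ^ 2 * Real.exp (-(s * ψ p))) (Set.Ioi 0) := by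
    intro s hs
    refine MeasureTheory.Integrable.mono' (hintgen s hs)
      ((measurable_id.pow_const 2).mul (hmeas_exp s)).aestronglyMeasurable
      (Filter.Eventually.of_forall fun p => ?_)
    rw [Real.norm_eq_abs, abs_of_nonneg (by positivity)]
    exact mul_le_mul_of_nonneg_right (by linarith [sq_nonneg p]) (Real.exp_pos _).le
  have hint_cos : ∀ s : ℝ, 0 < s → ∀ y : ℝ,
      MeasureTheory.IntegrableOn (fun p => Real.cos (p * y) * Real.exp (-(s * ψ p))) (Set.Ioi 0) := by
    intro s hs y
    refine MeasureTheory.Integrable.mono' (hintgen s hs)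
      (((measurable_id.mul_const y).cos).mul (hmeas_exp s)).aestronglyMeasurable
      (Filter.Eventually.of_forall fun p => ?_)
    rw [Real.norm_eq_abs, abs_mul, abs_of_nonneg (Real.exp_pos _).le]
    have h1 : |Real.cos (p * y)| ≤ 1 := Real.abs_cos_le_one _
    exact mul_le_mul_of_nonneg_right (le_trans h1 (by linarith [sq_nonneg p]))
      (Real.exp_pos _).le
  -- constants
  set δ₀ : ℝ := 1 / (C₀ * x₀ ^ 2) with hδ₀def
  have hδ₀pos : 0 < δ₀ := by positivity
  set K₁ : ℝ := ∫ p in Set.Ioi (0:ℝ), Real.exp (-(δ₀ * ψ p)) with hK₁def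
  have hK₁0 : 0 ≤ K₁ :=
    MeasureTheory.setIntegral_nonneg measurableSet_Ioi fun p _ => (Real.exp_pos _).le
  set K₂ : ℝ := x₀ ^ 3 + 32 / c₂ ^ 3 with hK₂def
  have hK₂0 : 0 < K₂ := by positivity
  set C : ℝ := (1 / Real.pi) * K₁ + (1 / Real.pi) * (1 + E) + K₂ with hCdef
  have hC1 : (1 / Real.pi) * K₁ ≤ C := by
    rw [hCdef]
    have : 0 < (1 / Real.pi) * (1 + E) := by positivity
    linarith
  have hC2 : (1 / Real.pi) * (1 + E) ≤ C := by
    rw [hCdef]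
    have : 0 ≤ (1 / Real.pi) * K₁ := by positivity
    linarith
  have hC3 : K₂ ≤ C := by
    rw [hCdef]
    have h1 : 0 ≤ (1 / Real.pi) * K₁ := by positivity
    have h2 : 0 < (1 / Real.pi) * (1 + E) := by positivity
    linarith
  have hCpos : 0 < C := lt_of_lt_of_le hK₂0 hC3
  clear_value δ₀ K₁ K₂ C
  refine ⟨C, ?_⟩
  intro δ hδ0 hδ1 h r hrδ hr1
  have hrpos : 0 < r := lt_of_lt_of_le hδ0 hrδ
  have hδ3 : (0:ℝ) < δ ^ 3 := by positivity
  -- key quantitative bound on ∫ p² exp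
  have key2 : ∫ p in Set.Ioi (0:ℝ), p ^ 2 * Real.exp (-(r * ψ p)) ≤ K₂ / δ ^ 3 := by
    have hb : 0 < δ * c₂ := by positivity
    have hint_all := hint_p2 r hrpos
    have hintA : MeasureTheory.IntegrableOn (fun p => p ^ 2 * Real.exp (-(r * ψ p)))
        (Set.Ioc 0 x₀) := hint_all.mono_set Set.Ioc_subset_Ioi_self
    have hintB : MeasureTheory.IntegrableOn (fun p => p ^ 2 * Real.exp (-(r * ψ p)))
        (Set.Ioi x₀) := hint_all.mono_set (Set.Ioi_subset_Ioi hx₀0.le)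
    have hsplit : (∫ p in Set.Ioi (0:ℝ), p ^ 2 * Real.exp (-(r * ψ p))) =
        (∫ p in Set.Ioc (0:ℝ) x₀, p ^ 2 * Real.exp (-(r * ψ p))) +
        ∫ p in Set.Ioi x₀, p ^ 2 * Real.exp (-(r * ψ p)) := by
      rw [← MeasureTheory.setIntegral_union (Set.Ioc_disjoint_Ioi le_rfl) measurableSet_Ioi
        hintA hintB, Set.Ioc_union_Ioi_eq_Ioi hx₀0.le]
    rw [hsplit]
    have hA : (∫ p in Set.Ioc (0:ℝ) x₀, p ^ 2 * Real.exp (-(r * ψ p))) ≤ x₀ ^ 3 := by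
      have h1 : (∫ p in Set.Ioc (0:ℝ) x₀, p ^ 2 * Real.exp (-(r * ψ p))) ≤
          ∫ _ in Set.Ioc (0:ℝ) x₀, x₀ ^ 2 := by
        refine MeasureTheory.setIntegral_mono_on hintA
          (MeasureTheory.integrableOn_const measure_Ioc_lt_top.ne) measurableSet_Ioc ?_
        intro p hp
        have hexp : Real.exp (-(r * ψ p)) ≤ 1 := by
          rw [Real.exp_le_one_iff]
          have := mul_nonneg hrpos.le (hnonneg p)
          linarith
        have hpp : p ^ 2 ≤ x₀ ^ 2 := by nlinarith [hp.1, hp.2]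
        calc p ^ 2 * Real.exp (-(r * ψ p)) ≤ p ^ 2 * 1 :=
              mul_le_mul_of_nonneg_left hexp (sq_nonneg p)
          _ = p ^ 2 := mul_one _
          _ ≤ x₀ ^ 2 := hpp
      rw [MeasureTheory.setIntegral_const, Real.volume_real_Ioc_of_le hx₀0.le, smul_eq_mul] at h1
      nlinarith [h1]
    have hB : (∫ p in Set.Ioi x₀, p ^ 2 * Real.exp (-(r * ψ p))) ≤ 32 / (δ * c₂) ^ 3 := by
      have hbound : ∀ p ∈ Set.Ioi x₀, p ^ 2 * Real.exp (-(r * ψ p)) ≤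
          16 / (δ * c₂) ^ 2 * Real.exp (-(δ * c₂ / 2 * p)) := by
        intro p hp
        have hpx : x₀ ≤ p := le_of_lt hp
        have hp0 : 0 < p := lt_of_lt_of_le hx₀0 hpx
        have h1 : Real.exp (-(r * ψ p)) ≤ Real.exp (-(δ * c₂ * p)) := by
          apply Real.exp_le_exp.2
          have h2 := hlin p hpx
          have h3 := mul_le_mul_of_nonneg_left h2 hδ0.le
          have h4 : δ * ψ p ≤ r * ψ p := mul_le_mul_of_nonneg_right hrδ (hnonneg p)
          linarith [mul_assoc δ c₂ p]
        have h5 := sq_exp_bound (δ * c₂) p hb hp0.le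
        exact le_trans (mul_le_mul_of_nonneg_left h1 (sq_nonneg p)) h5
      have hgint : MeasureTheory.IntegrableOn
          (fun p : ℝ => 16 / (δ * c₂) ^ 2 * Real.exp (-(δ * c₂ / 2 * p))) (Set.Ioi x₀) := by
        refine MeasureTheory.Integrable.const_mul ?_ _
        simpa [neg_mul, IntegrableOn] using exp_neg_integrableOn_Ioi x₀ (show 0 < δ * c₂ / 2 by positivity)
      have h6 := MeasureTheory.setIntegral_mono_on hintB hgint measurableSet_Ioi hbound
      have h7 : (∫ p in Set.Ioi x₀, 16 / (δ * c₂) ^ 2 * Real.exp (-(δ * c₂ / 2 * p))) =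
          16 / (δ * c₂) ^ 2 * (Real.exp (-(δ * c₂ / 2 * x₀)) / (δ * c₂ / 2)) := by
        rw [MeasureTheory.integral_const_mul, expint_Ioi (δ * c₂ / 2) x₀ (by positivity)]
      rw [h7] at h6
      refine le_trans h6 ?_
      have hexpo : Real.exp (-(δ * c₂ / 2 * x₀)) ≤ 1 := by
        rw [Real.exp_le_one_iff]
        have h0 : 0 ≤ δ * c₂ * x₀ := mul_nonneg hb.le hx₀0.le
        have he : δ * c₂ / 2 * x₀ = δ * c₂ * x₀ / 2 := by ring
        linarith
      calc 16 / (δ * c₂) ^ 2 * (Real.exp (-(δ * c₂ / 2 * x₀)) / (δ * c₂ / 2)) =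
          32 / (δ * c₂) ^ 3 * Real.exp (-(δ * c₂ / 2 * x₀)) := by
            field_simp
            ring
        _ ≤ 32 / (δ * c₂) ^ 3 * 1 := mul_le_mul_of_nonneg_left hexpo (by positivity)
        _ = 32 / (δ * c₂) ^ 3 := mul_one _
    have hδ31 : δ ^ 3 ≤ 1 := pow_le_one₀ hδ0.le hδ1.le
    have e1 : 32 / (δ * c₂) ^ 3 = 32 / c₂ ^ 3 / δ ^ 3 := by
      field_simp
    have e2 : x₀ ^ 3 ≤ x₀ ^ 3 / δ ^ 3 := by
      rw [le_div_iff₀ hδ3]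
      calc x₀ ^ 3 * δ ^ 3 ≤ x₀ ^ 3 * 1 :=
            mul_le_mul_of_nonneg_left hδ31 (pow_pos hx₀0 3).le
        _ = x₀ ^ 3 := mul_one _
    calc (∫ p in Set.Ioc (0:ℝ) x₀, p ^ 2 * Real.exp (-(r * ψ p))) +
        (∫ p in Set.Ioi x₀, p ^ 2 * Real.exp (-(r * ψ p))) ≤ x₀ ^ 3 + 32 / (δ * c₂) ^ 3 :=
          add_le_add hA hB
      _ = x₀ ^ 3 + 32 / c₂ ^ 3 / δ ^ 3 := by rw [e1]
      _ ≤ x₀ ^ 3 / δ ^ 3 + 32 / c₂ ^ 3 / δ ^ 3 := by linarith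
      _ = K₂ / δ ^ 3 := by rw [hK₂def]; ring
  -- Goal 1
  have goal1 : pdens ψ r 0 ≤ C * max (psiInv ψ (1 / δ)) 1 := by
    have hmax1 : (1:ℝ) ≤ max (psiInv ψ (1 / δ)) 1 := le_max_right _ _
    have hmax0 : (0:ℝ) ≤ max (psiInv ψ (1 / δ)) 1 := by linarith
    have e0 : pdens ψ r 0 = (1 / Real.pi) * ∫ p in Set.Ioi (0:ℝ), Real.exp (-(r * ψ p)) := by
      simp only [pdens, neg_mul, mul_zero, Real.cos_zero, one_mul]
    rcases le_or_gt δ₀ δ with hcase | hcase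
    · have hIK : (∫ p in Set.Ioi (0:ℝ), Real.exp (-(r * ψ p))) ≤ K₁ := by
        rw [hK₁def]
        refine MeasureTheory.setIntegral_mono_on (hint_exp r hrpos) (hint_exp δ₀ hδ₀pos)
          measurableSet_Ioi ?_
        intro p _
        apply Real.exp_le_exp.2
        have h1 : δ₀ * ψ p ≤ r * ψ p := mul_le_mul_of_nonneg_right (by linarith) (hnonneg p)
        linarith
      calc pdens ψ r 0 = (1 / Real.pi) * ∫ p in Set.Ioi (0:ℝ), Real.exp (-(r * ψ p)) := e0
        _ ≤ (1 / Real.pi) * K₁ := mul_le_mul_of_nonneg_left hIK (by positivity)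
        _ ≤ C := hC1
        _ = C * 1 := (mul_one C).symm
        _ ≤ C * max (psiInv ψ (1 / δ)) 1 := mul_le_mul_of_nonneg_left hmax1 hCpos.le
    · set T := psiInv ψ (1 / δ) with hTdef
      set S := {l : ℝ | 0 < l ∧ 1 / δ ≤ ψ l} with hSdef
      have hTS : T = sInf S := rfl
      clear_value T
      have hSne : S.Nonempty := by
        refine ⟨max x₀ (1 / (δ * c₂)), lt_of_lt_of_le hx₀0 (le_max_left _ _), ?_⟩
        have hge : x₀ ≤ max x₀ (1 / (δ * c₂)) := le_max_left _ _
        have h2 := hlin _ hge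
        have h3 : 1 / (δ * c₂) ≤ max x₀ (1 / (δ * c₂)) := le_max_right _ _
        have h4 : c₂ * (1 / (δ * c₂)) = 1 / δ := by field_simp
        linarith [mul_le_mul_of_nonneg_left h3 hc₂.le]
      have hSbdd : BddBelow S := ⟨0, fun l hl => hl.1.le⟩
      have hSsub : ∀ l ∈ S, x₀ ≤ l := by
        intro l hl
        by_contra hcon
        push_neg at hcon
        have h1 : ψ l ≤ C₀ * l ^ 2 := hC0 l
        have h2 : C₀ * l ^ 2 ≤ C₀ * x₀ ^ 2 := by
          have hle : l ^ 2 ≤ x₀ ^ 2 := by nlinarith [hl.1.le, hcon.le]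
          exact mul_le_mul_of_nonneg_left hle hC₀pos.le
        have h3 : C₀ * x₀ ^ 2 < 1 / δ := by
          have h5 : 0 < C₀ * x₀ ^ 2 := by positivity
          rw [hδ₀def, lt_div_iff₀ h5] at hcase
          rw [lt_div_iff₀ hδ0]
          linarith [mul_comm δ (C₀ * x₀ ^ 2), mul_comm (C₀ * x₀ ^ 2) δ]
        have h6 := hl.2
        linarith
      have hT₀ : x₀ ≤ T := hTS ▸ le_csInf hSne hSsub
      have hT0 : 0 < T := lt_of_lt_of_le hx₀0 hT₀
      have hψT : 1 / δ ≤ ψ T := by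
        have hcont : ContinuousOn ψ (Set.Ici x₀) := fun l hl =>
          ((hdiff1 l (lt_of_lt_of_le hx₀0 hl)).continuousAt).continuousWithinAt
        have hclosed : IsClosed (Set.Ici x₀ ∩ ψ ⁻¹' Set.Ici (1 / δ)) :=
          hcont.preimage_isClosed_of_isClosed isClosed_Ici isClosed_Ici
        have hsub2 : S ⊆ Set.Ici x₀ ∩ ψ ⁻¹' Set.Ici (1 / δ) := fun l hl => ⟨hSsub l hl, hl.2⟩
        have hTc : sInf S ∈ closure S := csInf_mem_closure hSne hSbdd
        have h2 := hclosed.closure_subset_iff.2 hsub2 hTc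
        rw [hTS]
        exact h2.2
      set a : ℝ := 1 / (E * T) with hadef
      have ha : 0 < a := by positivity
      clear_value a
      have hptail : ∀ p ∈ Set.Ioi T, Real.exp (-(r * ψ p)) ≤ Real.exp (-(a * p)) := by
        intro p hp
        have hpT : T ≤ p := le_of_lt hp
        have hp0 : 0 < p := lt_of_lt_of_le hT0 hpT
        apply Real.exp_le_exp.2
        have h1 := hPot T p hT₀ hpT
        have h2 : 1 ≤ δ * ψ T := by
          have h2' := mul_le_mul_of_nonneg_left hψT hδ0.le
          rw [mul_one_div, div_self hδ0.ne'] at h2'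
          exact h2'
        have hpT0 : 0 ≤ p / T := div_nonneg hp0.le hT0.le
        have h3 := mul_le_mul_of_nonneg_left h2 hpT0
        have h4 := mul_le_mul_of_nonneg_left h1 hδ0.le
        have h5 : δ * ψ p ≤ r * ψ p := mul_le_mul_of_nonneg_right hrδ (hnonneg p)
        have h6 : -(r * ψ p) ≤ -(a * p) ↔ a * p ≤ r * ψ p := neg_le_neg_iff
        rw [h6]
        have h7 : a * p = p / T / E := by rw [hadef]; field_simp
        rw [h7, div_le_iff₀ hE0]
        have e1 : p / T * (δ * ψ T) = δ * (p / T * ψ T) := by ring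
        have e2 : δ * (E * ψ p) = E * (δ * ψ p) := by ring
        have h9 : E * (δ * ψ p) ≤ E * (r * ψ p) := mul_le_mul_of_nonneg_left h5 hE0.le
        have e3 : E * (r * ψ p) = r * ψ p * E := by ring
        linarith [h3, h4, e1, e2, h9, e3]
      have hintT1 : MeasureTheory.IntegrableOn (fun p => Real.exp (-(r * ψ p))) (Set.Ioc 0 T) :=
        (hint_exp r hrpos).mono_set Set.Ioc_subset_Ioi_self
      have hintT2 : MeasureTheory.IntegrableOn (fun p => Real.exp (-(r * ψ p))) (Set.Ioi T) :=
        (hint_exp r hrpos).mono_set (Set.Ioi_subset_Ioi hT0.le)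
      have hsplit : (∫ p in Set.Ioi (0:ℝ), Real.exp (-(r * ψ p))) =
          (∫ p in Set.Ioc (0:ℝ) T, Real.exp (-(r * ψ p))) +
          ∫ p in Set.Ioi T, Real.exp (-(r * ψ p)) := by
        rw [← MeasureTheory.setIntegral_union (Set.Ioc_disjoint_Ioi le_rfl) measurableSet_Ioi
          hintT1 hintT2, Set.Ioc_union_Ioi_eq_Ioi hT0.le]
      have hA : (∫ p in Set.Ioc (0:ℝ) T, Real.exp (-(r * ψ p))) ≤ T := by
        have h1 : (∫ p in Set.Ioc (0:ℝ) T, Real.exp (-(r * ψ p))) ≤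
            ∫ _ in Set.Ioc (0:ℝ) T, (1:ℝ) := by
          refine MeasureTheory.setIntegral_mono_on hintT1
            (MeasureTheory.integrableOn_const measure_Ioc_lt_top.ne)
            measurableSet_Ioc ?_
          intro p _
          rw [Real.exp_le_one_iff]
          have := mul_nonneg hrpos.le (hnonneg p)
          linarith
        rw [MeasureTheory.setIntegral_const, Real.volume_real_Ioc_of_le hT0.le, smul_eq_mul] at h1
        linarith
      have hB : (∫ p in Set.Ioi T, Real.exp (-(r * ψ p))) ≤ E * T := by
        have hgint : MeasureTheory.IntegrableOn (fun p : ℝ => Real.exp (-(a * p)))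
            (Set.Ioi T) := by
          simpa [neg_mul] using exp_neg_integrableOn_Ioi T ha
        have h6 := MeasureTheory.setIntegral_mono_on hintT2 hgint measurableSet_Ioi hptail
        rw [expint_Ioi a T ha] at h6
        refine le_trans h6 ?_
        have hexpo : Real.exp (-(a * T)) ≤ 1 := by
          rw [Real.exp_le_one_iff]
          linarith [mul_pos ha hT0]
        have h8 : Real.exp (-(a * T)) / a ≤ 1 / a := by gcongr
        refine le_trans h8 ?_
        rw [hadef]
        rw [one_div_one_div]
      calc pdens ψ r 0 = (1 / Real.pi) * ∫ p in Set.Ioi (0:ℝ), Real.exp (-(r * ψ p)) := e0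
        _ ≤ (1 / Real.pi) * (T + E * T) := by
            refine mul_le_mul_of_nonneg_left ?_ (by positivity)
            rw [hsplit]; linarith
        _ = (1 / Real.pi) * (1 + E) * T := by ring
        _ ≤ (1 / Real.pi) * (1 + E) * max T 1 :=
            mul_le_mul_of_nonneg_left (le_max_left _ _) (by positivity)
        _ ≤ C * max T 1 := mul_le_mul_of_nonneg_right hC2 (by
            have := le_max_right T (1:ℝ); linarith)
  -- Goal 2 core
  have hpdeq : ∀ y : ℝ, pdens ψ r y =
      (1 / Real.pi) * ∫ p in Set.Ioi (0:ℝ), Real.cos (p * y) * Real.exp (-(r * ψ p)) := by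
    intro y
    simp only [pdens, neg_mul]
  have goal2core : |pdens ψ r (0 + h) - pdens ψ r 0| ≤
      (1 / Real.pi) * (h ^ 2 / 2 * (K₂ / δ ^ 3)) := by
    have hdiffeq : pdens ψ r (0 + h) - pdens ψ r 0 =
        (1 / Real.pi) * ∫ p in Set.Ioi (0:ℝ),
          (Real.cos (p * h) - 1) * Real.exp (-(r * ψ p)) := by
      have e0 : pdens ψ r 0 = (1 / Real.pi) * ∫ p in Set.Ioi (0:ℝ), Real.exp (-(r * ψ p)) := by
        simp only [pdens, neg_mul, mul_zero, Real.cos_zero, one_mul]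
      rw [hpdeq (0 + h), e0, ← mul_sub,
        ← MeasureTheory.integral_sub (hint_cos r hrpos (0 + h)) (hint_exp r hrpos)]
      congr 1
      refine MeasureTheory.integral_congr_ae (Filter.Eventually.of_forall fun p => ?_)
      show Real.cos (p * (0 + h)) * Real.exp (-(r * ψ p)) - Real.exp (-(r * ψ p)) =
        (Real.cos (p * h) - 1) * Real.exp (-(r * ψ p))
      rw [zero_add]
      ring
    rw [hdiffeq, abs_mul, abs_of_pos (show (0:ℝ) < 1 / Real.pi by positivity)]
    refine mul_le_mul_of_nonneg_left ?_ (by positivity)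
    have hintdiff : MeasureTheory.IntegrableOn
        (fun p => (Real.cos (p * h) - 1) * Real.exp (-(r * ψ p))) (Set.Ioi 0) := by
      refine MeasureTheory.Integrable.mono' ((hint_exp r hrpos).const_mul 2)
        ((((measurable_id.mul_const h).cos.sub measurable_const).mul
          (hmeas_exp r)).aestronglyMeasurable) (Filter.Eventually.of_forall fun p => ?_)
      rw [Real.norm_eq_abs, abs_mul, abs_of_nonneg (Real.exp_pos _).le]
      refine mul_le_mul_of_nonneg_right ?_ (Real.exp_pos _).le
      have := Real.abs_cos_le_one (p * h)
      rw [abs_sub_comm]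
      calc |1 - Real.cos (p * h)| ≤ |(1:ℝ)| + |Real.cos (p * h)| := abs_sub _ _
        _ ≤ 2 := by rw [abs_one]; linarith
    have h1 : |∫ p in Set.Ioi (0:ℝ), (Real.cos (p * h) - 1) * Real.exp (-(r * ψ p))| ≤
        ∫ p in Set.Ioi (0:ℝ), |Real.cos (p * h) - 1| * Real.exp (-(r * ψ p)) := by
      have := MeasureTheory.norm_integral_le_integral_norm
        (μ := MeasureTheory.volume.restrict (Set.Ioi (0:ℝ)))
        (fun p => (Real.cos (p * h) - 1) * Real.exp (-(r * ψ p)))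
      simpa [Real.norm_eq_abs, abs_mul, abs_of_nonneg (Real.exp_pos _).le] using this
    refine le_trans h1 ?_
    have hintabs : MeasureTheory.IntegrableOn
        (fun p => |Real.cos (p * h) - 1| * Real.exp (-(r * ψ p))) (Set.Ioi 0) := by
      refine MeasureTheory.Integrable.mono' ((hint_exp r hrpos).const_mul 2)
        ((((measurable_id.mul_const h).cos.sub measurable_const).abs.mul
          (hmeas_exp r)).aestronglyMeasurable) (Filter.Eventually.of_forall fun p => ?_)
      rw [Real.norm_eq_abs, abs_mul, abs_abs, abs_of_nonneg (Real.exp_pos _).le]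
      refine mul_le_mul_of_nonneg_right ?_ (Real.exp_pos _).le
      have := Real.abs_cos_le_one (p * h)
      rw [abs_sub_comm]
      calc |1 - Real.cos (p * h)| ≤ |(1:ℝ)| + |Real.cos (p * h)| := abs_sub _ _
        _ ≤ 2 := by rw [abs_one]; linarith
    have h2 : (∫ p in Set.Ioi (0:ℝ), |Real.cos (p * h) - 1| * Real.exp (-(r * ψ p))) ≤
        ∫ p in Set.Ioi (0:ℝ), h ^ 2 / 2 * (p ^ 2 * Real.exp (-(r * ψ p))) := by
      refine MeasureTheory.setIntegral_mono_on hintabs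
        ((hint_p2 r hrpos).const_mul _) measurableSet_Ioi ?_
      intro p _
      show |Real.cos (p * h) - 1| * Real.exp (-(r * ψ p)) ≤
        h ^ 2 / 2 * (p ^ 2 * Real.exp (-(r * ψ p)))
      have hcos : |Real.cos (p * h) - 1| ≤ (p * h) ^ 2 / 2 := by
        rw [abs_sub_comm, abs_of_nonneg (by linarith [Real.cos_le_one (p * h)])]
        linarith [Real.one_sub_sq_div_two_le_cos (x := p * h)]
      have hm := mul_le_mul_of_nonneg_right hcos (Real.exp_pos (-(r * ψ p))).le
      have he : (p * h) ^ 2 / 2 * Real.exp (-(r * ψ p)) =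
          h ^ 2 / 2 * (p ^ 2 * Real.exp (-(r * ψ p))) := by ring
      linarith
    refine le_trans h2 ?_
    rw [MeasureTheory.integral_const_mul]
    exact mul_le_mul_of_nonneg_left key2 (by positivity)
  have hXnn : (0:ℝ) ≤ h ^ 2 / δ ^ 3 := div_nonneg (sq_nonneg h) hδ3.le
  have hKd3 : (0:ℝ) ≤ K₂ / δ ^ 3 := div_nonneg hK₂0.le hδ3.le
  have goal2 : |pdens ψ r (0 + h) - pdens ψ r 0| ≤ C * h ^ 2 / δ ^ 3 := by
    refine le_trans goal2core ?_
    rw [mul_div_assoc]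
    have hfrac : (1:ℝ) / Real.pi ≤ 1 := by
      rw [div_le_one hπ]; exact hπ1
    have hnn : (0:ℝ) ≤ h ^ 2 / 2 * (K₂ / δ ^ 3) :=
      mul_nonneg (div_nonneg (sq_nonneg h) (by norm_num)) hKd3
    have h1 : (1 / Real.pi) * (h ^ 2 / 2 * (K₂ / δ ^ 3)) ≤ h ^ 2 * (K₂ / δ ^ 3) := by
      calc (1 / Real.pi) * (h ^ 2 / 2 * (K₂ / δ ^ 3)) ≤ 1 * (h ^ 2 / 2 * (K₂ / δ ^ 3)) :=
            mul_le_mul_of_nonneg_right hfrac hnn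
        _ = h ^ 2 / 2 * (K₂ / δ ^ 3) := one_mul _
        _ ≤ h ^ 2 * (K₂ / δ ^ 3) :=
            mul_le_mul_of_nonneg_right (by linarith [sq_nonneg h]) hKd3
    refine le_trans h1 ?_
    have : h ^ 2 * (K₂ / δ ^ 3) = K₂ * (h ^ 2 / δ ^ 3) := by ring
    rw [this]
    exact mul_le_mul_of_nonneg_right hC3 hXnn
  refine ⟨goal1, goal2, ?_⟩
  -- Goal 3
  have hsym : pdens ψ r (0 - h) = pdens ψ r (0 + h) := by
    simp only [pdens]
    congr 1
    refine congrArg _ (funext fun p => ?_)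
    rw [zero_sub, zero_add, mul_neg, Real.cos_neg]
  rw [hsym]
  have heq3 : 2 * pdens ψ r 0 - pdens ψ r (0 + h) - pdens ψ r (0 + h) =
      -(2 * (pdens ψ r (0 + h) - pdens ψ r 0)) := by ring
  rw [heq3, abs_neg, abs_mul, abs_two]
  have h2b : 2 * |pdens ψ r (0 + h) - pdens ψ r 0| ≤
      2 * ((1 / Real.pi) * (h ^ 2 / 2 * (K₂ / δ ^ 3))) := by linarith [goal2core, abs_nonneg (pdens ψ r (0 + h) - pdens ψ r 0)]
  refine le_trans h2b ?_
  rw [mul_div_assoc]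
  have hfrac : (1:ℝ) / Real.pi ≤ 1 := by rw [div_le_one hπ]; exact hπ1
  have : 2 * ((1 / Real.pi) * (h ^ 2 / 2 * (K₂ / δ ^ 3))) ≤ h ^ 2 * (K₂ / δ ^ 3) := by
    have he : 2 * ((1 / Real.pi) * (h ^ 2 / 2 * (K₂ / δ ^ 3))) =
        (1 / Real.pi) * (h ^ 2 * (K₂ / δ ^ 3)) := by ring
    rw [he]
    calc (1 / Real.pi) * (h ^ 2 * (K₂ / δ ^ 3)) ≤ 1 * (h ^ 2 * (K₂ / δ ^ 3)) :=
          mul_le_mul_of_nonneg_right hfrac (mul_nonneg (sq_nonneg h) hKd3)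
      _ = h ^ 2 * (K₂ / δ ^ 3) := one_mul _
  refine le_trans this ?_
  have heq : h ^ 2 * (K₂ / δ ^ 3) = K₂ * (h ^ 2 / δ ^ 3) := by ring
  rw [heq]
  exact mul_le_mul_of_nonneg_right hC3 hXnn
end

section
/- There exists a constant C < ∞ such that for all t ∈ (0,1] and all y ∈ ℝ, ∫₀^t p_s(y) ds ≤ C·t·ψ⁻¹(1/t). -/
open MeasureTheory Set Filter

lemma exp_neg_le_rpow {x q : ℝ} (hx : 0 < x) (hq0 : 0 < q) (hq1 : q ≤ 1) :
    Real.exp (-x) ≤ x ^ (-q) := by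
  rcases le_total x 1 with h | h
  · calc Real.exp (-x) ≤ 1 := Real.exp_le_one_iff.mpr (by linarith)
    _ = x ^ (0:ℝ) := (Real.rpow_zero x).symm
    _ ≤ x ^ (-q) := Real.rpow_le_rpow_of_exponent_ge hx h (by linarith)
  · have h1 : Real.exp (-x) ≤ x⁻¹ := by
      rw [Real.exp_neg]
      apply inv_anti₀ hx
      linarith [Real.add_one_le_exp x]
    calc Real.exp (-x) ≤ x⁻¹ := h1
    _ = x ^ (-1:ℝ) := (Real.rpow_neg_one x).symm
    _ ≤ x ^ (-q) := Real.rpow_le_rpow_of_exponent_le h (by linarith)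

lemma psi_mul_pow_mono (ψ : ℝ → ℝ)
    (hdiff1 : ∀ p : ℝ, 0 < p → DifferentiableAt ℝ ψ p)
    (hnonneg : ∀ p : ℝ, 0 ≤ ψ p) (m : ℕ)
    (hm : ∀ l : ℝ, 1 ≤ l → -((m+1) * ψ l) ≤ l * deriv ψ l) :
    MonotoneOn (fun l => ψ l * l ^ (m+1)) (Set.Ici (1:ℝ)) := by
  apply monotoneOn_of_deriv_nonneg (convex_Ici 1)
  · intro x hx
    have hx0 : (0:ℝ) < x := lt_of_lt_of_le one_pos hx
    exact (((hdiff1 x hx0).continuousAt.mul (continuousAt_pow _ _)).continuousWithinAt)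
  · intro x hx
    rw [interior_Ici] at hx
    have hx0 : (0:ℝ) < x := lt_trans one_pos hx
    exact (((hdiff1 x hx0).mul (differentiableAt_pow _)).differentiableWithinAt)
  · intro x hx
    rw [interior_Ici] at hx
    have hx1 : (1:ℝ) < x := hx
    have hx0 : (0:ℝ) < x := lt_trans one_pos hx1
    have hd : HasDerivAt (fun l => ψ l * l ^ (m+1))
        (deriv ψ x * x ^ (m+1) + ψ x * ((m+1) * x ^ m)) x := by
      have := ((hdiff1 x hx0).hasDerivAt).mul (hasDerivAt_pow (m+1) x)
      simp only [Nat.cast_add, Nat.cast_one, add_tsub_cancel_right] at this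
      exact this
    rw [hd.deriv]
    have h1 := hm x hx1.le
    have h2 : (0:ℝ) ≤ x ^ m := pow_nonneg hx0.le m
    have h3 : x ^ (m+1) = x * x ^ m := by ring
    have h4 : deriv ψ x * x ^ (m+1) = (x * deriv ψ x) * x ^ m := by ring
    linarith [mul_le_mul_of_nonneg_right h1 h2, hnonneg x]


lemma potter (ψ : ℝ → ℝ) (m : ℕ) (γ X : ℝ) (hX1 : 1 ≤ X) (hγ0 : 0 ≤ γ)
    (hmono : MonotoneOn (fun l => ψ l * l ^ (m+1)) (Set.Ici (1:ℝ)))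
    (hψpos : ∀ x : ℝ, 1 ≤ x → 0 < ψ x)
    (hX : ∀ x : ℝ, X ≤ x → (2:ℝ) ^ γ * ψ x ≤ ψ (2 * x)) :
    ∀ x, X ≤ x → ∀ l, 1 ≤ l →
      ((2:ℝ) ^ (m+1) * (2:ℝ) ^ γ)⁻¹ * l ^ γ * ψ x ≤ ψ (l * x) := by
  have h2γpos : (0:ℝ) < (2:ℝ) ^ γ := Real.rpow_pos_of_pos two_pos γ
  have hiter : ∀ k : ℕ, ∀ x : ℝ, X ≤ x → ((2:ℝ)^γ)^k * ψ x ≤ ψ (2^k * x) := by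
    intro k
    induction k with
    | zero => intro x hx; simp
    | succ k ih =>
      intro x hx
      have hx0 : (0:ℝ) < x := lt_of_lt_of_le one_pos (le_trans hX1 hx)
      have h2k1 : (1:ℝ) ≤ 2^k := one_le_pow₀ (by norm_num)
      have h2k : X ≤ 2^k * x := le_trans hx (le_mul_of_one_le_left hx0.le h2k1)
      calc ((2:ℝ)^γ)^(k+1) * ψ x = (2:ℝ)^γ * (((2:ℝ)^γ)^k * ψ x) := by ring
      _ ≤ (2:ℝ)^γ * ψ (2^k * x) := mul_le_mul_of_nonneg_left (ih x hx) h2γpos.le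
      _ ≤ ψ (2 * (2^k * x)) := hX _ h2k
      _ = ψ (2^(k+1) * x) := by ring_nf
  intro x hx l hl
  have hx1 : (1:ℝ) ≤ x := le_trans hX1 hx
  have hx0 : (0:ℝ) < x := lt_of_lt_of_le one_pos hx1
  have hl0 : (0:ℝ) < l := lt_of_lt_of_le one_pos hl
  set k := ⌊Real.logb 2 l⌋₊ with hk
  have hlogb : 0 ≤ Real.logb 2 l := Real.logb_nonneg one_lt_two hl
  have hk1 : (2:ℝ)^k ≤ l := by
    calc (2:ℝ)^k = (2:ℝ)^(k:ℝ) := (Real.rpow_natCast 2 k).symm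
    _ ≤ (2:ℝ)^(Real.logb 2 l) := Real.rpow_le_rpow_of_exponent_le one_le_two (Nat.floor_le hlogb)
    _ = l := Real.rpow_logb two_pos (by norm_num) hl0
  have hk2 : l < 2^(k+1) := by
    calc l = (2:ℝ)^(Real.logb 2 l) := (Real.rpow_logb two_pos (by norm_num) hl0).symm
    _ < (2:ℝ)^((k:ℝ)+1) := Real.rpow_lt_rpow_of_exponent_lt one_lt_two (Nat.lt_floor_add_one _)
    _ = (2:ℝ)^(k+1) := by rw [← Real.rpow_natCast 2 (k+1)]; push_cast; ring_nf
  have h2k0 : (0:ℝ) < 2^k := by positivity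
  set y := (2:ℝ)^k * x with hy
  have hy1 : (1:ℝ) ≤ y := one_le_mul_of_one_le_of_one_le (one_le_pow₀ (by norm_num)) hx1
  have hyX : X ≤ y := le_trans hx (le_mul_of_one_le_left hx0.le (one_le_pow₀ (by norm_num)))
  have hz1 : y ≤ l * x := mul_le_mul_of_nonneg_right hk1 hx0.le
  have hlx1 : (1:ℝ) ≤ l * x := le_trans hy1 hz1
  have hratio := hmono (mem_Ici.mpr hy1) (mem_Ici.mpr hlx1) hz1
  have hlx2 : l * x ≤ 2 * y := by
    have := mul_le_mul_of_nonneg_right hk2.le hx0.le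
    calc l * x ≤ 2^(k+1) * x := this
    _ = 2 * y := by rw [hy]; ring
  have key1 : ψ y ≤ 2^(m+1) * ψ (l*x) := by
    have hy0 : (0:ℝ) < y ^ (m+1) := pow_pos (lt_of_lt_of_le one_pos hy1) _
    have hψlx : (0:ℝ) ≤ ψ (l*x) := (hψpos _ hlx1).le
    have hp1 : (l*x)^(m+1) ≤ (2*y)^(m+1) :=
      pow_le_pow_left₀ (le_trans zero_le_one hlx1) hlx2 _
    have h2 : ψ (l*x) * (l*x)^(m+1) ≤ ψ (l*x) * ((2:ℝ)^(m+1) * y^(m+1)) := by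
      rw [← mul_pow]; exact mul_le_mul_of_nonneg_left hp1 hψlx
    have h3 : ψ y * y^(m+1) ≤ (2^(m+1) * ψ (l*x)) * y^(m+1) := by
      calc ψ y * y^(m+1) ≤ ψ (l*x) * (l*x)^(m+1) := hratio
      _ ≤ ψ (l*x) * ((2:ℝ)^(m+1) * y^(m+1)) := h2
      _ = (2^(m+1) * ψ (l*x)) * y^(m+1) := by ring
    exact le_of_mul_le_mul_right h3 hy0
  have hcast : ((2:ℝ)^γ)^k = ((2:ℝ)^k)^γ := by
    rw [← Real.rpow_natCast ((2:ℝ)^γ) k, ← Real.rpow_natCast (2:ℝ) k,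
      ← Real.rpow_mul (by norm_num : (0:ℝ) ≤ 2), ← Real.rpow_mul (by norm_num : (0:ℝ) ≤ 2),
      mul_comm]
  have hl2 : l/2 ≤ (2:ℝ)^k := by linarith [hk2, pow_succ (2:ℝ) k]
  have hpow_ge : (l/2)^γ ≤ ((2:ℝ)^k)^γ := Real.rpow_le_rpow (by positivity) hl2 hγ0
  have hdiv : (l/2)^γ = l^γ / (2:ℝ)^γ := Real.div_rpow hl0.le (by norm_num : (0:ℝ) ≤ 2) γ
  have hψx : (0:ℝ) ≤ ψ x := (hψpos x hx1).le
  have main : l^γ * ψ x ≤ (2:ℝ)^γ * ((2:ℝ)^(m+1) * ψ (l*x)) := by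
    have e1 : l^γ/(2:ℝ)^γ * ψ x ≤ ((2:ℝ)^k)^γ * ψ x :=
      mul_le_mul_of_nonneg_right (hdiv ▸ hpow_ge) hψx
    have e2 : ((2:ℝ)^γ)^k * ψ x ≤ ψ y := hiter k x hx
    calc l^γ * ψ x = (2:ℝ)^γ * (l^γ/(2:ℝ)^γ * ψ x) := by field_simp
    _ ≤ (2:ℝ)^γ * (((2:ℝ)^k)^γ * ψ x) := mul_le_mul_of_nonneg_left e1 h2γpos.le
    _ = (2:ℝ)^γ * (((2:ℝ)^γ)^k * ψ x) := by rw [hcast]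
    _ ≤ (2:ℝ)^γ * ψ y := mul_le_mul_of_nonneg_left e2 h2γpos.le
    _ ≤ (2:ℝ)^γ * ((2:ℝ)^(m+1) * ψ (l*x)) := mul_le_mul_of_nonneg_left key1 h2γpos.le
  have hc0 : (0:ℝ) < (2:ℝ)^(m+1) * (2:ℝ)^γ := by positivity
  rw [mul_assoc, inv_mul_le_iff₀ hc0]
  nlinarith [main]


lemma key_bound (ψ : ℝ → ℝ) (hmeas : Measurable ψ) (hnonneg : ∀ p : ℝ, 0 ≤ ψ p)
    (hψpos1 : ∀ x : ℝ, 1 ≤ x → 0 < ψ x)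
    (γ q c : ℝ) (hγq : 1 < γ * q) (hq0 : 0 < q) (hq1 : q < 1) (hc0 : 0 < c)
    (X : ℝ) (hX1 : 1 ≤ X)
    (hPot : ∀ x, X ≤ x → ∀ l, 1 ≤ l → c * l ^ γ * ψ x ≤ ψ (l * x))
    (b : ℝ) (hbX : X ≤ b) (t : ℝ) (ht : 0 < t) (ht1 : t ≤ 1) (y : ℝ) :
    (∫ s in (0:ℝ)..t, pdens ψ s y) ≤
      (1/Real.pi) * (b * t + ((c * ψ b) ^ (-q) * b / (γ*q - 1)) * (t ^ (1-q) / (1-q))) := by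
  have hπ : (0:ℝ) < Real.pi := Real.pi_pos
  have hb1 : (1:ℝ) ≤ b := le_trans hX1 hbX
  have hb0 : (0:ℝ) < b := lt_of_lt_of_le one_pos hb1
  have hψb : (0:ℝ) < ψ b := hψpos1 b hb1
  set T : ℝ := (c * ψ b) ^ (-q) * b / (γ*q - 1) with hTdef
  have hT0 : (0:ℝ) ≤ T := by
    apply div_nonneg _ (by linarith)
    exact mul_nonneg (Real.rpow_nonneg (by positivity) _) hb0.le
  -- pointwise lower bound for ψ
  have hψlow : ∀ p : ℝ, b ≤ p → c * (p/b) ^ γ * ψ b ≤ ψ p := by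
    intro p hp
    have h := hPot b hbX (p/b) ((one_le_div hb0).mpr hp)
    rwa [div_mul_cancel₀ _ (ne_of_gt hb0)] at h
  -- per-s facts
  have hmeas_exp : ∀ s : ℝ, Measurable (fun p : ℝ => Real.exp (-s * ψ p)) := by
    intro s
    exact (Measurable.exp ((hmeas.const_mul (-s))))
  have htail : ∀ s : ℝ, 0 < s → ∀ p : ℝ, b < p →
      Real.exp (-s * ψ p) ≤ (s ^ (-q) * (c * ψ b) ^ (-q) * b ^ (γ*q)) * p ^ (-(γ*q)) := by
    intro s hs0 p hp
    have hp0 : (0:ℝ) < p := lt_trans hb0 hp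
    have hψp : (0:ℝ) < ψ p := hψpos1 p (le_trans hb1 hp.le)
    have hlow := hψlow p hp.le
    have hlow0 : (0:ℝ) < c * (p/b) ^ γ * ψ b := by
      have : (0:ℝ) < (p/b) ^ γ := Real.rpow_pos_of_pos (by positivity) _
      positivity
    have h1 : Real.exp (-s * ψ p) ≤ (s * ψ p) ^ (-q) := by
      rw [neg_mul]
      exact exp_neg_le_rpow (by positivity) hq0 hq1.le
    have h2 : (s * ψ p) ^ (-q) = s ^ (-q) * (ψ p) ^ (-q) :=
      Real.mul_rpow hs0.le hψp.le
    have h3 : (ψ p) ^ (-q) ≤ (c * (p/b) ^ γ * ψ b) ^ (-q) :=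
      Real.rpow_le_rpow_of_nonpos hlow0 hlow (by linarith)
    have h4 : (c * (p/b) ^ γ * ψ b) ^ (-q)
        = (c * ψ b) ^ (-q) * ((p/b) ^ γ) ^ (-q) := by
      rw [show c * (p/b) ^ γ * ψ b = (c * ψ b) * ((p/b) ^ γ) from by ring]
      exact Real.mul_rpow (by positivity) (Real.rpow_pos_of_pos (by positivity) _).le
    have h5 : ((p/b) ^ γ) ^ (-q) = b ^ (γ*q) * p ^ (-(γ*q)) := by
      have hpb0 : (0:ℝ) ≤ p/b := by positivity
      rw [← Real.rpow_mul hpb0, show γ * (-q) = -(γ*q) from by ring, Real.rpow_neg hpb0,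
        Real.div_rpow hp0.le hb0.le, inv_div, Real.rpow_neg hp0.le, div_eq_mul_inv]
    calc Real.exp (-s * ψ p) ≤ (s * ψ p) ^ (-q) := h1
    _ = s ^ (-q) * (ψ p) ^ (-q) := h2
    _ ≤ s ^ (-q) * ((c * (p/b) ^ γ * ψ b) ^ (-q)) :=
        mul_le_mul_of_nonneg_left h3 (Real.rpow_nonneg hs0.le _)
    _ = (s ^ (-q) * (c * ψ b) ^ (-q) * b ^ (γ*q)) * p ^ (-(γ*q)) := by
        rw [h4, h5]; ring
  have hrpow_int : IntegrableOn (fun p : ℝ => p ^ (-(γ*q))) (Ioi b) :=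
    integrableOn_Ioi_rpow_of_lt (by linarith) hb0
  have hIoc_int : ∀ s : ℝ, 0 < s → IntegrableOn (fun p => Real.exp (-s * ψ p)) (Ioc 0 b) := by
    intro s hs
    apply Integrable.mono' ((integrableOn_const_iff (C := (1:ℝ))).mpr (Or.inr measure_Ioc_lt_top))
      ((hmeas_exp s).aestronglyMeasurable)
    apply ae_of_all
    intro p
    rw [Real.norm_eq_abs, Real.abs_exp]
    apply Real.exp_le_one_iff.mpr
    rw [neg_mul, neg_nonpos]
    exact mul_nonneg hs.le (hnonneg p)
  have hIoi_int : ∀ s : ℝ, 0 < s → IntegrableOn (fun p => Real.exp (-s * ψ p)) (Ioi b) := by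
    intro s hs
    apply Integrable.mono' (hrpow_int.const_mul (s ^ (-q) * (c * ψ b) ^ (-q) * b ^ (γ*q)))
      ((hmeas_exp s).aestronglyMeasurable)
    filter_upwards [ae_restrict_mem measurableSet_Ioi] with p hp
    rw [Real.norm_eq_abs, Real.abs_exp]
    exact htail s hs p hp
  have hIoi0_int : ∀ s : ℝ, 0 < s → IntegrableOn (fun p => Real.exp (-s * ψ p)) (Ioi 0) := by
    intro s hs
    rw [← Ioc_union_Ioi_eq_Ioi hb0.le]
    exact (hIoc_int s hs).union (hIoi_int s hs)
  have hIbound : ∀ s : ℝ, 0 < s →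
      (∫ p in Ioi (0:ℝ), Real.exp (-s * ψ p)) ≤ b + T * s ^ (-q) := by
    intro s hs
    have hsplit : (∫ p in Ioi (0:ℝ), Real.exp (-s * ψ p)) =
        (∫ p in Ioc (0:ℝ) b, Real.exp (-s * ψ p)) + (∫ p in Ioi b, Real.exp (-s * ψ p)) := by
      rw [← Ioc_union_Ioi_eq_Ioi hb0.le,
        setIntegral_union (Ioc_disjoint_Ioi le_rfl) measurableSet_Ioi (hIoc_int s hs)
          (hIoi_int s hs)]
    have hpiece1 : (∫ p in Ioc (0:ℝ) b, Real.exp (-s * ψ p)) ≤ b := by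
      calc (∫ p in Ioc (0:ℝ) b, Real.exp (-s * ψ p)) ≤ ∫ _ in Ioc (0:ℝ) b, (1:ℝ) := by
            apply setIntegral_mono_on (hIoc_int s hs)
              ((integrableOn_const_iff (C := (1:ℝ))).mpr (Or.inr measure_Ioc_lt_top)) measurableSet_Ioc
            intro p _
            rw [Real.exp_le_one_iff, neg_mul, neg_nonpos]
            exact mul_nonneg hs.le (hnonneg p)
      _ = b := by
            simp [Real.volume_Ioc, ENNReal.toReal_ofReal hb0.le, hb0.le]
    have hpiece2 : (∫ p in Ioi b, Real.exp (-s * ψ p)) ≤ T * s ^ (-q) := by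
      have h1 : (∫ p in Ioi b, Real.exp (-s * ψ p)) ≤
          ∫ p in Ioi b, (s ^ (-q) * (c * ψ b) ^ (-q) * b ^ (γ*q)) * p ^ (-(γ*q)) := by
        apply setIntegral_mono_on (hIoi_int s hs)
          (hrpow_int.const_mul _) measurableSet_Ioi
        intro p hp
        exact htail s hs p hp
      have h2 : (∫ p in Ioi b, (s ^ (-q) * (c * ψ b) ^ (-q) * b ^ (γ*q)) * p ^ (-(γ*q)))
          = (s ^ (-q) * (c * ψ b) ^ (-q) * b ^ (γ*q)) * (-b ^ (-(γ*q) + 1) / (-(γ*q) + 1)) := by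
        rw [MeasureTheory.integral_const_mul, integral_Ioi_rpow_of_lt (by linarith) hb0]
      have hbb : b ^ (γ*q) * b ^ (1 - γ*q) = b := by
        rw [← Real.rpow_add hb0]
        norm_num
      have hne : γ*q - 1 ≠ 0 := by linarith
      have hne' : 1 - γ*q ≠ 0 := by intro h; rw [sub_eq_zero] at h; linarith
      have e1 : (-b ^ (1 - γ*q)) / (1 - γ*q) = b ^ (1 - γ*q) / (γ*q - 1) := by
        rw [div_eq_div_iff hne' hne]
        ring
      have h3 : (s ^ (-q) * (c * ψ b) ^ (-q) * b ^ (γ*q)) * (-b ^ (-(γ*q) + 1) / (-(γ*q) + 1))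
          = T * s ^ (-q) := by
        rw [show (-(γ*q) + 1 : ℝ) = 1 - γ*q from by ring, e1]
        calc s ^ (-q) * (c * ψ b) ^ (-q) * b ^ (γ*q) * (b ^ (1 - γ*q) / (γ*q - 1))
            = (s ^ (-q) * (c * ψ b) ^ (-q)) * (b ^ (γ*q) * b ^ (1 - γ*q)) / (γ*q - 1) := by
              ring
        _ = (s ^ (-q) * (c * ψ b) ^ (-q)) * b / (γ*q - 1) := by rw [hbb]
        _ = T * s ^ (-q) := by rw [hTdef]; ring
      exact le_of_le_of_eq h1 (h2.trans h3)
    linarith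
  -- bound on pdens
  have hcos_int : ∀ s : ℝ, 0 < s →
      IntegrableOn (fun p => Real.cos (p * y) * Real.exp (-s * ψ p)) (Ioi 0) := by
    intro s hs
    apply Integrable.mono' (hIoi0_int s hs)
      (((Real.measurable_cos.comp (measurable_id.mul_const y)).mul
        (hmeas_exp s)).aestronglyMeasurable)
    apply ae_of_all
    intro p
    rw [Pi.mul_apply, norm_mul, Real.norm_eq_abs, Real.norm_eq_abs, Real.abs_exp]
    exact mul_le_of_le_one_left (Real.exp_pos _).le (Real.abs_cos_le_one _)
  have hpd : ∀ s : ℝ, 0 < s →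
      |pdens ψ s y| ≤ (1/Real.pi) * (b + T * s ^ (-q)) := by
    intro s hs
    have h2 : |∫ p in Ioi (0:ℝ), Real.cos (p * y) * Real.exp (-s * ψ p)|
        ≤ ∫ p in Ioi (0:ℝ), Real.exp (-s * ψ p) := by
      rw [← Real.norm_eq_abs]
      calc ‖∫ p in Ioi (0:ℝ), Real.cos (p * y) * Real.exp (-s * ψ p)‖
          ≤ ∫ p in Ioi (0:ℝ), ‖Real.cos (p * y) * Real.exp (-s * ψ p)‖ :=
            norm_integral_le_integral_norm _
      _ ≤ ∫ p in Ioi (0:ℝ), Real.exp (-s * ψ p) := by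
            apply setIntegral_mono_on ((hcos_int s hs).norm) (hIoi0_int s hs) measurableSet_Ioi
            intro p _
            rw [norm_mul, Real.norm_eq_abs, Real.norm_eq_abs, Real.abs_exp]
            exact mul_le_of_le_one_left (Real.exp_pos _).le (Real.abs_cos_le_one _)
    have hb' : 0 ≤ b + T * s ^ (-q) := by
      have := Real.rpow_nonneg hs.le (-q)
      nlinarith
    calc |pdens ψ s y| = |1/Real.pi| * |∫ p in Ioi (0:ℝ), Real.cos (p * y) * Real.exp (-s * ψ p)| := by
          rw [pdens, abs_mul]
    _ ≤ |1/Real.pi| * (∫ p in Ioi (0:ℝ), Real.exp (-s * ψ p)) :=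
          mul_le_mul_of_nonneg_left h2 (abs_nonneg _)
    _ ≤ |1/Real.pi| * (b + T * s ^ (-q)) :=
          mul_le_mul_of_nonneg_left (hIbound s hs) (abs_nonneg _)
    _ = (1/Real.pi) * (b + T * s ^ (-q)) := by
          rw [abs_of_pos (by positivity : (0:ℝ) < 1/Real.pi)]
  -- integrability in s
  have hrs_int : IntegrableOn (fun s : ℝ => s ^ (-q)) (Ioc 0 t) := by
    rw [← intervalIntegrable_iff_integrableOn_Ioc_of_le ht.le]
    exact intervalIntegral.intervalIntegrable_rpow' (by linarith)
  have hGint : IntegrableOn (fun s : ℝ => (1/Real.pi) * (b + T * s ^ (-q))) (Ioc 0 t) :=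
    ((((integrableOn_const_iff (C := b)).mpr (Or.inr measure_Ioc_lt_top)).add
      (hrs_int.const_mul T)).const_mul _)
  have hSM : AEStronglyMeasurable (fun s => pdens ψ s y)
      (volume.restrict (Ioc (0:ℝ) t)) := by
    have hFm : StronglyMeasurable
        (fun z : ℝ × ℝ => Real.cos (z.2 * y) * Real.exp (-z.1 * ψ z.2)) := by
      apply Measurable.stronglyMeasurable
      exact (Real.measurable_cos.comp (measurable_snd.mul_const y)).mul
        (((measurable_fst.neg).mul (hmeas.comp measurable_snd)).exp)
    have hInt := hFm.integral_prod_right' (ν := volume.restrict (Ioi (0:ℝ)))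
    exact ((stronglyMeasurable_const.mul hInt).aestronglyMeasurable).restrict
  have hae_norm : ∀ᵐ s ∂(volume.restrict (Ioc (0:ℝ) t)),
      ‖pdens ψ s y‖ ≤ (1/Real.pi) * (b + T * s ^ (-q)) := by
    filter_upwards [ae_restrict_mem measurableSet_Ioc] with s hs
    rw [Real.norm_eq_abs]
    exact hpd s hs.1
  have hPint : IntegrableOn (fun s => pdens ψ s y) (Ioc 0 t) :=
    hGint.mono' hSM hae_norm
  -- conclusion
  rw [intervalIntegral.integral_of_le ht.le]
  have hmono2 : (∫ s in Ioc (0:ℝ) t, pdens ψ s y)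
      ≤ ∫ s in Ioc (0:ℝ) t, (1/Real.pi) * (b + T * s ^ (-q)) := by
    apply integral_mono_ae hPint hGint
    filter_upwards [hae_norm] with s hs
    exact le_trans (le_abs_self _) (by rwa [Real.norm_eq_abs] at hs)
  have hr : (∫ s in Ioc (0:ℝ) t, s ^ (-q)) = t ^ (1-q) / (1-q) := by
    rw [← intervalIntegral.integral_of_le ht.le,
      integral_rpow (Or.inl (by linarith : (-1:ℝ) < -q)),
      Real.zero_rpow (by intro h; nlinarith [h] : -q + 1 ≠ 0),
      show (-q + 1 : ℝ) = 1 - q from by ring]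
    ring
  have hGeq : (∫ s in Ioc (0:ℝ) t, (1/Real.pi) * (b + T * s ^ (-q)))
      = (1/Real.pi) * (b * t + T * (t ^ (1-q) / (1-q))) := by
    rw [MeasureTheory.integral_const_mul]
    rw [integral_add ((integrableOn_const_iff (C := b)).mpr (Or.inr measure_Ioc_lt_top))
      (hrs_int.const_mul T)]
    rw [MeasureTheory.integral_const_mul, hr, setIntegral_const, measureReal_def, Real.volume_Ioc,
      smul_eq_mul, ENNReal.toReal_ofReal (by linarith : (0:ℝ) ≤ t - 0)]
    ring
  linarith [hmono2, hGeq ▸ hmono2]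


set_option maxHeartbeats 1000000 in
theorem stmt_17
    (β : ℝ) (hβ1 : 1 < β) (hβ2 : β ≤ 2)
    (ψ : ℝ → ℝ)
    (hmeas : Measurable ψ)
    (heven : ∀ p : ℝ, ψ (-p) = ψ p)
    (hnonneg : ∀ p : ℝ, 0 ≤ ψ p)
    (hpos : ∀ p : ℝ, p ≠ 0 → 0 < ψ p)
    (hRV : ∀ l : ℝ, 0 < l →
      Filter.Tendsto (fun x => ψ (l * x) / ψ x) Filter.atTop (nhds (l ^ β)))
    (hdiff1 : ∀ p : ℝ, 0 < p → DifferentiableAt ℝ ψ p)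
    (hdiff2 : ∀ p : ℝ, 0 < p → DifferentiableAt ℝ (deriv ψ) p)
    (D₁ D₂ : ℝ)
    (hD1 : ∀ l : ℝ, 1 ≤ l → l * |deriv ψ l| ≤ D₁ * ψ l)
    (hD2 : ∀ l : ℝ, 1 ≤ l → l ^ 2 * |deriv (deriv ψ) l| ≤ D₂ * ψ l)
    (hint1 : MeasureTheory.IntegrableOn (fun l : ℝ => (deriv ψ l) ^ 2) (Set.Ioc (0:ℝ) 1))
    (hint2 : MeasureTheory.IntegrableOn (fun l : ℝ => |deriv (deriv ψ) l|) (Set.Ioc (0:ℝ) 1))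
    (hint3 : MeasureTheory.IntegrableOn (fun l : ℝ => ψ l / l) (Set.Ioc (0:ℝ) 1))
    (C₀ : ℝ) (hC0 : ∀ p : ℝ, ψ p ≤ C₀ * p ^ 2)
    (hliminf : 0 < Filter.liminf (fun p : ℝ => ψ p / p ^ 2) (nhdsWithin (0:ℝ) ({0}ᶜ))) :
    ∃ C : ℝ, ∀ t : ℝ, 0 < t → t ≤ 1 → ∀ y : ℝ,
      (∫ s in (0:ℝ)..t, pdens ψ s y) ≤ C * t * psiInv ψ (1 / t) := by
  have hπ : (0:ℝ) < Real.pi := Real.pi_pos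
  have hψ1 : 0 < ψ 1 := hpos 1 one_ne_zero
  have hψpos1 : ∀ x : ℝ, 1 ≤ x → 0 < ψ x :=
    fun x hx => hpos x (by linarith : (0:ℝ) < x).ne'
  have hC₀pos : 0 < C₀ := by nlinarith [hψ1, hC0 1]
  set m := ⌈D₁⌉₊ with hm_def
  have hmD : D₁ ≤ (m:ℝ) := Nat.le_ceil D₁
  have hmono := psi_mul_pow_mono ψ hdiff1 hnonneg m (by
    intro l hl
    have h1 := hD1 l hl
    have h2 : -|deriv ψ l| ≤ deriv ψ l := neg_abs_le _
    have h3 : (0:ℝ) < l := by linarith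
    have h4 := mul_le_mul_of_nonneg_left h2 h3.le
    have h5 := mul_le_mul_of_nonneg_right (show D₁ ≤ (m:ℝ)+1 from by linarith) (hnonneg l)
    linarith)
  set γ := (1+β)/2 with hγdef
  have hγ1 : 1 < γ := by rw [hγdef]; linarith
  have hγβ : γ < β := by rw [hγdef]; linarith
  have hγ0 : (0:ℝ) ≤ γ := by linarith
  have h2β : (2:ℝ)^γ < (2:ℝ)^β := Real.rpow_lt_rpow_of_exponent_lt one_lt_two hγβ
  have hev : ∀ᶠ x in atTop, (2:ℝ)^γ < ψ (2*x)/ψ x :=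
    (hRV 2 two_pos).eventually (lt_mem_nhds h2β)
  obtain ⟨X₀, hX₀⟩ := eventually_atTop.mp hev
  set X := max X₀ 1 with hXdef
  have hX1 : (1:ℝ) ≤ X := le_max_right _ _
  have hXprop : ∀ x, X ≤ x → (2:ℝ)^γ * ψ x ≤ ψ (2*x) := by
    intro x hx
    have hψx : 0 < ψ x := hψpos1 x (le_trans (le_max_right _ _) hx)
    have h := hX₀ x (le_trans (le_max_left _ _) hx)
    rw [lt_div_iff₀ hψx] at h
    linarith
  have hPot := potter ψ m γ X hX1 hγ0 hmono hψpos1 hXprop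
  set c := ((2:ℝ)^(m+1) * (2:ℝ)^γ)⁻¹ with hcdef
  have hc0 : 0 < c := by rw [hcdef]; positivity
  set q := 2/(1+γ) with hqdef
  have hq0 : 0 < q := by rw [hqdef]; positivity
  have hq1 : q < 1 := by rw [hqdef, div_lt_one (by linarith)]; linarith
  have hγq : 1 < γ * q := by
    rw [hqdef, show γ * (2/(1+γ)) = 2*γ/(1+γ) from by ring, lt_div_iff₀ (by linarith)]
    linarith
  have hψX : 0 < ψ X := hψpos1 X hX1
  set K₀ := c^(-q)/(γ*q-1)/(1-q) with hK
  set C₁ := (1/Real.pi)*(1+K₀) with hC₁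
  set M₀ := (1/Real.pi)*(X + (c*ψ X)^(-q) * X/(γ*q-1) * (1/(1-q))) with hM₀
  set C₂ := M₀ * (C₀ * X^2 * Real.sqrt C₀) with hC₂
  refine ⟨max C₁ C₂, ?_⟩
  intro t ht ht1 y
  have hSne : {l : ℝ | 0 < l ∧ 1/t ≤ ψ l}.Nonempty := by
    set lam0 := max 1 (1/(t*c*ψ X)) with hlam
    have hlam1 : (1:ℝ) ≤ lam0 := le_max_left _ _
    have hlam0 : (0:ℝ) < lam0 := by linarith
    refine ⟨lam0 * X, by positivity, ?_⟩
    have h := hPot X le_rfl lam0 hlam1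
    have hlamγ : lam0 ≤ lam0^γ := by
      calc lam0 = lam0 ^ (1:ℝ) := (Real.rpow_one _).symm
      _ ≤ lam0^γ := Real.rpow_le_rpow_of_exponent_le hlam1 (by linarith)
    have h2 : 1/(t*c*ψ X) ≤ lam0 := le_max_right _ _
    calc 1/t = c * (1/(t*c*ψ X)) * ψ X := by field_simp
    _ ≤ c * lam0 * ψ X := by
        apply mul_le_mul_of_nonneg_right _ hψX.le
        exact mul_le_mul_of_nonneg_left h2 hc0.le
    _ ≤ c * lam0^γ * ψ X := by
        apply mul_le_mul_of_nonneg_right _ hψX.le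
        exact mul_le_mul_of_nonneg_left hlamγ hc0.le
    _ ≤ ψ (lam0 * X) := h
  have hSbd : BddBelow {l : ℝ | 0 < l ∧ 1/t ≤ ψ l} := ⟨0, fun l hl => hl.1.le⟩
  have hinv : psiInv ψ (1/t) = sInf {l : ℝ | 0 < l ∧ 1/t ≤ ψ l} := rfl
  set a := sInf {l : ℝ | 0 < l ∧ 1/t ≤ ψ l} with ha_def
  have hsq0 : 0 < Real.sqrt (C₀*t) := Real.sqrt_pos.mpr (by positivity)
  have haS : ∀ l ∈ {l : ℝ | 0 < l ∧ 1/t ≤ ψ l}, (Real.sqrt (C₀*t))⁻¹ ≤ l := by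
    intro l hl
    obtain ⟨hl0, hlψ⟩ := hl
    have h1 : 1/t ≤ C₀ * l^2 := le_trans hlψ (hC0 l)
    have h1' : 1 ≤ C₀ * l^2 * t := by
      rw [div_le_iff₀ ht] at h1; linarith
    have hsq : Real.sqrt (C₀*t)^2 = C₀*t := Real.sq_sqrt (by positivity)
    have h2 : 1 ≤ Real.sqrt (C₀*t) * l := by nlinarith [mul_pos hsq0 hl0]
    calc (Real.sqrt (C₀*t))⁻¹ = (Real.sqrt (C₀*t))⁻¹ * 1 := by ring
    _ ≤ (Real.sqrt (C₀*t))⁻¹ * (Real.sqrt (C₀*t) * l) :=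
        mul_le_mul_of_nonneg_left h2 (by positivity)
    _ = l := by field_simp
  have ha_lb : (Real.sqrt (C₀*t))⁻¹ ≤ a := le_csInf hSne haS
  have ha0 : 0 < a := lt_of_lt_of_le (by positivity) ha_lb
  have hψa : 1/t ≤ ψ a := by
    by_contra hcon
    push_neg at hcon
    have hcont : ContinuousAt ψ a := (hdiff1 a ha0).continuousAt
    have hev2 : ∀ᶠ l in nhds a, ψ l < 1/t := hcont.eventually (gt_mem_nhds hcon)
    obtain ⟨δ, hδ0, hδ⟩ := Metric.eventually_nhds_iff.mp hev2
    have hlow : a + δ/2 ≤ a := by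
      apply le_csInf hSne
      intro l hl
      by_contra hcl
      push_neg at hcl
      have hla : a ≤ l := csInf_le hSbd hl
      have hball : dist l a < δ := by
        rw [Real.dist_eq, abs_lt]; constructor <;> linarith
      exact absurd hl.2 (not_le.mpr (hδ hball))
    linarith
  set b := max a X with hbdef
  have hbX : X ≤ b := le_max_right _ _
  have hKB := key_bound ψ hmeas hnonneg hψpos1 γ q c hγq hq0 hq1 hc0 X hX1 hPot b hbX t ht ht1 y
  rw [hinv]
  refine le_trans hKB ?_
  have hta : 0 < t * a := mul_pos ht ha0
  rcases le_or_gt X a with hXa | haX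
  · have hb : b = a := max_eq_left hXa
    rw [hb]
    have hψa0 : 0 < ψ a := lt_of_lt_of_le (by positivity) hψa
    have h1 : (c * ψ a)^(-q) ≤ c^(-q) * t^q := by
      rw [Real.mul_rpow hc0.le hψa0.le]
      apply mul_le_mul_of_nonneg_left _ (Real.rpow_nonneg hc0.le _)
      calc (ψ a)^(-q) ≤ (1/t)^(-q) :=
            Real.rpow_le_rpow_of_nonpos (by positivity) hψa (by linarith)
      _ = t^q := by
          rw [one_div, Real.inv_rpow ht.le, Real.rpow_neg ht.le, inv_inv]
    have htq : t^q * t^(1-q) = t := by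
      rw [← Real.rpow_add ht]; norm_num
    have hfac : (0:ℝ) ≤ a/(γ*q-1) * (t^(1-q)/(1-q)) := by
      have := Real.rpow_nonneg ht.le (1-q)
      have h7 : (0:ℝ) < γ*q-1 := by linarith
      have h8 : (0:ℝ) < 1-q := by linarith
      positivity
    have hineq : ((c*ψ a)^(-q) * a/(γ*q-1)) * (t^(1-q)/(1-q)) ≤ K₀ * (a*t) := by
      calc ((c*ψ a)^(-q) * a/(γ*q-1)) * (t^(1-q)/(1-q))
          = (c*ψ a)^(-q) * (a/(γ*q-1) * (t^(1-q)/(1-q))) := by ring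
      _ ≤ (c^(-q) * t^q) * (a/(γ*q-1) * (t^(1-q)/(1-q))) :=
          mul_le_mul_of_nonneg_right h1 hfac
      _ = c^(-q)/(γ*q-1)/(1-q) * (a * (t^q * t^(1-q))) := by ring
      _ = K₀ * (a*t) := by rw [htq, hK]
    have hid : C₁*(t*a) = (1/Real.pi)*(t*a) + (1/Real.pi)*(K₀*(a*t)) := by
      rw [hC₁]; ring
    have F1 := mul_le_mul_of_nonneg_left hineq (by positivity : (0:ℝ) ≤ 1/Real.pi)
    have F2 := mul_le_mul_of_nonneg_right (le_max_left C₁ C₂) hta.le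
    linarith
  · have hb : b = X := max_eq_right haX.le
    rw [hb]
    obtain ⟨l, hlS, hlX⟩ : ∃ l, l ∈ {l : ℝ | 0 < l ∧ 1/t ≤ ψ l} ∧ l < X := by
      by_contra hcon
      push_neg at hcon
      exact absurd (le_csInf hSne hcon) (not_le.mpr haX)
    have ht_lb : 1/(C₀*X^2) ≤ t := by
      have h1 : 1/t ≤ C₀*X^2 := by
        refine le_trans hlS.2 (le_trans (hC0 l) ?_)
        exact mul_le_mul_of_nonneg_left (pow_le_pow_left₀ hlS.1.le hlX.le 2) hC₀pos.le
      rw [div_le_iff₀ ht] at h1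
      rw [div_le_iff₀ (by positivity)]
      linarith
    have ha_lb2 : (Real.sqrt C₀)⁻¹ ≤ a := by
      refine le_trans (inv_anti₀ hsq0 (Real.sqrt_le_sqrt (by nlinarith))) ha_lb
    have hsc0 : 0 < Real.sqrt C₀ := Real.sqrt_pos.mpr hC₀pos
    have hXt : X * t ≤ X := by nlinarith
    have hFnn : (0:ℝ) ≤ (c*ψ X)^(-q) * X/(γ*q-1) := by
      have h7 : (0:ℝ) < γ*q-1 := by linarith
      have := Real.rpow_nonneg (by positivity : (0:ℝ) ≤ c*ψ X) (-q)
      positivity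
    have hW : ((c*ψ X)^(-q) * X/(γ*q-1)) * (t^(1-q)/(1-q))
        ≤ ((c*ψ X)^(-q) * X/(γ*q-1)) * (1/(1-q)) := by
      apply mul_le_mul_of_nonneg_left _ hFnn
      apply (div_le_div_iff_of_pos_right (by linarith : (0:ℝ) < 1-q)).mpr
      exact Real.rpow_le_one ht.le ht1 (by linarith)
    have hM₀ge : (1/Real.pi) * (X * t + ((c*ψ X)^(-q) * X/(γ*q-1)) * (t^(1-q)/(1-q))) ≤ M₀ := by
      rw [hM₀]
      apply mul_le_mul_of_nonneg_left _ (by positivity)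
      linarith
    have hM₀0 : (0:ℝ) ≤ M₀ := by
      rw [hM₀]
      have h8 : (0:ℝ) < 1-q := by linarith
      have hXl : (0:ℝ) < X := by linarith
      have h9 := mul_le_mul_of_nonneg_left hW (by positivity : (0:ℝ) ≤ 1/Real.pi)
      positivity
    have hfin : M₀ ≤ C₂ * t * a := by
      rw [hC₂]
      have h4 : (1/(C₀*X^2)) * (Real.sqrt C₀)⁻¹ ≤ t * a :=
        mul_le_mul ht_lb ha_lb2 (by positivity) ht.le
      have h5 : (C₀*X^2*Real.sqrt C₀) * ((1/(C₀*X^2)) * (Real.sqrt C₀)⁻¹) = 1 := by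
        field_simp
      calc M₀ = M₀ * ((C₀*X^2*Real.sqrt C₀) * ((1/(C₀*X^2)) * (Real.sqrt C₀)⁻¹)) := by
            rw [h5]; ring
      _ ≤ M₀ * ((C₀*X^2*Real.sqrt C₀) * (t*a)) := by
          apply mul_le_mul_of_nonneg_left _ hM₀0
          apply mul_le_mul_of_nonneg_left h4 (by positivity)
      _ = M₀ * (C₀*X^2*Real.sqrt C₀) * t * a := by ring
    refine le_trans hM₀ge (le_trans hfin ?_)
    exact mul_le_mul_of_nonneg_right
      (mul_le_mul_of_nonneg_right (le_max_right C₁ C₂) ht.le) ha0.le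
end

section
/- For every h > 0 the integral c_{ψ,h,0} = ∫₀^∞ (p_s(0) − p_s(h)) ds is finite and equals (1/π)∫₀^∞ (1 − cos(ph))/ψ(p) dp, and lim_{h→0⁺} h·ψ(1/h)·c_{ψ,h,0} = c_{β,0}, where c_{β,0} = (2/π)∫₀^∞ sin²(p/2)/p^β dp. -/
open Real MeasureTheory Set Filter Topology

lemma potter_bounds (β : ℝ) (hβ : 0 ≤ β) (ψ : ℝ → ℝ)
    (hpos : ∀ p : ℝ, p ≠ 0 → 0 < ψ p)
    (hRV : ∀ l : ℝ, 0 < l → Tendsto (fun x => ψ (l * x) / ψ x) atTop (𝓝 (l ^ β)))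
    (hdiff1 : ∀ p : ℝ, 0 < p → DifferentiableAt ℝ ψ p)
    (D₁ : ℝ) (hD1 : ∀ l : ℝ, 1 ≤ l → l * |deriv ψ l| ≤ D₁ * ψ l)
    (ε : ℝ) (hε : 0 < ε) :
    ∃ X : ℝ, 1 ≤ X ∧ ∀ x, X ≤ x → ∀ l, 1 ≤ l →
      Real.exp (-ε) * l ^ (β - ε) * ψ x ≤ ψ (l * x) ∧
      ψ (l * x) ≤ Real.exp ε * l ^ (β + ε) * ψ x := by
  set f : ℝ → ℝ := fun t => Real.log (ψ (Real.exp t)) with hfdef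
  have hψexp : ∀ t : ℝ, 0 < ψ (Real.exp t) := fun t => hpos _ (Real.exp_pos t).ne'
  set D : ℝ := max D₁ 0 with hD
  have hder : ∀ t : ℝ, HasDerivAt f (Real.exp t * deriv ψ (Real.exp t) / ψ (Real.exp t)) t := by
    intro t
    have h1 : HasDerivAt (fun t => ψ (Real.exp t)) (deriv ψ (Real.exp t) * Real.exp t) t :=
      ((hdiff1 _ (Real.exp_pos t)).hasDerivAt).comp t (Real.hasDerivAt_exp t)
    have h2 := (Real.hasDerivAt_log (hψexp t).ne').comp t h1
    refine h2.congr_deriv ?_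
    ring
  have hlip : ∀ a ∈ Ici (0:ℝ), ∀ b ∈ Ici (0:ℝ), |f b - f a| ≤ D * |b - a| := by
    intro a ha b hb
    have hbd : ∀ x ∈ Ici (0:ℝ), ‖deriv f x‖ ≤ D := by
      intro x hx
      have hd := (hder x).deriv
      rw [hd]
      have h1 : (1:ℝ) ≤ Real.exp x := Real.one_le_exp hx
      have h2 := hD1 _ h1
      have h3 : ‖Real.exp x * deriv ψ (Real.exp x) / ψ (Real.exp x)‖
          = Real.exp x * |deriv ψ (Real.exp x)| / ψ (Real.exp x) := by
        rw [Real.norm_eq_abs, abs_div, abs_mul, abs_of_pos (Real.exp_pos x),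
          abs_of_pos (hψexp x)]
      rw [h3]
      rw [div_le_iff₀ (hψexp x)]
      calc Real.exp x * |deriv ψ (Real.exp x)| ≤ D₁ * ψ (Real.exp x) := h2
        _ ≤ D * ψ (Real.exp x) := by
            apply mul_le_mul_of_nonneg_right (le_max_left _ _) (hψexp x).le
    have := Convex.norm_image_sub_le_of_norm_deriv_le (𝕜 := ℝ) (f := f) (s := Ici (0:ℝ))
      (fun x hx => (hder x).differentiableAt) hbd (convex_Ici 0) ha hb
    simpa [Real.norm_eq_abs] using this
  have hpoint : ∀ u : ℝ, Tendsto (fun t => f (t + u) - f t) atTop (𝓝 (β * u)) := by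
    intro u
    have hl : (0:ℝ) < Real.exp u := Real.exp_pos u
    have h1 : Tendsto (fun t : ℝ => ψ (Real.exp u * Real.exp t) / ψ (Real.exp t)) atTop
        (𝓝 ((Real.exp u) ^ β)) := (hRV _ hl).comp Real.tendsto_exp_atTop
    have h2 : Tendsto (fun t : ℝ => Real.log (ψ (Real.exp u * Real.exp t) / ψ (Real.exp t)))
        atTop (𝓝 (Real.log ((Real.exp u) ^ β))) :=
      (Real.continuousAt_log (by positivity)).tendsto.comp h1
    have h3 : Real.log ((Real.exp u) ^ β) = β * u := by
      rw [Real.log_rpow hl, Real.log_exp]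
    rw [h3] at h2
    apply h2.congr
    intro t
    have : Real.exp u * Real.exp t = Real.exp (t + u) := by rw [← Real.exp_add]; ring_nf
    rw [this, Real.log_div (hψexp (t + u)).ne' (hψexp t).ne']
  -- uniform convergence on u ∈ [0,1]
  have hunif : ∀ ε' : ℝ, 0 < ε' → ∃ T : ℝ, 0 ≤ T ∧ ∀ t, T ≤ t → ∀ u, 0 ≤ u → u ≤ 1 →
      |f (t + u) - f t - β * u| ≤ ε' := by
    intro ε' hε'
    obtain ⟨N, hN⟩ := exists_nat_gt (2 * (D + β + 1) / ε')
    have hDβ : (0:ℝ) < D + β + 1 := by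
      have : (0:ℝ) ≤ D := le_max_right _ _
      linarith
    have hNpos : (0:ℝ) < N := lt_of_le_of_lt (by positivity) hN
    have hNe : (D + β + 1) / N ≤ ε' / 2 := by
      rw [div_le_div_iff₀ hNpos (by norm_num)]
      rw [div_lt_iff₀ hε'] at hN
      nlinarith
    have hev : ∀ᶠ t in atTop, (0 ≤ t ∧ ∀ i ∈ Finset.range (N + 1),
        |f (t + i / N) - f t - β * (i / N)| ≤ ε' / 2) := by
      refine (eventually_ge_atTop 0).and ?_
      rw [eventually_all_finset]
      intro i _
      have := (hpoint (i / N)).sub_const (β * (i / N))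
      simp only [sub_self] at this
      have h2 := (tendsto_order.1 (this.abs)).2 (ε' / 2) (by simpa using half_pos hε')
      · exact h2.mono fun t ht => le_of_lt (by simpa [abs_sub_comm] using ht)
    obtain ⟨T, hT⟩ := eventually_atTop.1 hev
    refine ⟨max T 0, le_max_right _ _, ?_⟩
    intro t ht u hu0 hu1
    obtain ⟨ht0, hti⟩ := hT t (le_trans (le_max_left _ _) ht)
    have ht0' : (0:ℝ) ≤ t := le_trans (le_max_right _ _) ht
    set i : ℕ := ⌊u * N⌋₊ with hi
    have hiN : (i:ℝ) ≤ u * N := Nat.floor_le (mul_nonneg hu0 hNpos.le)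
    have hiu : u * N < i + 1 := Nat.lt_floor_add_one _
    have hile : i ≤ N := by
      have : (i:ℝ) ≤ N := le_trans hiN (by nlinarith)
      exact_mod_cast this
    have hkey := hti i (Finset.mem_range.2 (Nat.lt_succ_of_le hile))
    have hud : 0 ≤ u - i / N ∧ u - i / N ≤ 1 / N := by
      constructor
      · have : (i:ℝ) / N ≤ u := by rw [div_le_iff₀ hNpos]; exact hiN
        linarith
      · have : u ≤ (i + 1) / N := by rw [le_div_iff₀ hNpos]; linarith
        have h1N : (i:ℝ)/N + 1/N = (i+1)/N := by field_simp
        linarith [this, h1N]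
    have hlip1 : |f (t + u) - f (t + i / N)| ≤ D * (1 / N) := by
      have hiN0 : (0:ℝ) ≤ (i:ℝ) / N := by positivity
      have := hlip (t + i / N) (by simp only [mem_Ici]; linarith) (t + u)
        (by simp only [mem_Ici]; linarith)
      have habs : |t + u - (t + i / N)| = u - i / N := by
        have h : t + u - (t + i / N) = u - i / N := by ring
        rw [h, abs_of_nonneg hud.1]
      calc |f (t + u) - f (t + i / N)| ≤ D * |t + u - (t + i / N)| := this
        _ ≤ D * (1 / N) := by
            rw [habs]
            exact mul_le_mul_of_nonneg_left hud.2 (le_max_right _ _)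
    calc |f (t + u) - f t - β * u|
        ≤ |f (t + u) - f (t + i / N)| + |f (t + i / N) - f t - β * (i / N)|
          + |β * (u - i / N)| := by
          have : f (t + u) - f t - β * u =
            (f (t + u) - f (t + i / N)) + (f (t + i / N) - f t - β * (i / N))
            - β * (u - i / N) := by ring
          rw [this]
          exact (abs_sub _ _).trans (by gcongr; exact abs_add_le _ _)
      _ ≤ D * (1 / N) + ε' / 2 + β * (1 / N) := by
          refine add_le_add (add_le_add hlip1 hkey) ?_
          rw [abs_mul, abs_of_nonneg hβ, abs_of_nonneg hud.1]
          exact mul_le_mul_of_nonneg_left hud.2 hβ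
      _ ≤ (D + β + 1) / N + ε' / 2 := by
          have h1N : 0 < 1 / (N:ℝ) := by positivity
          have h2 : D * (1/N) + β * (1/N) + 1 * (1/N) = (D + β + 1) / N := by ring
          linarith
      _ ≤ ε' / 2 + ε' / 2 := by linarith
      _ = ε' := by ring
  -- chaining
  have hchain : ∃ T : ℝ, 0 ≤ T ∧ ∀ t, T ≤ t → ∀ u, 0 ≤ u →
      |f (t + u) - f t - β * u| ≤ ε * (u + 1) := by
    obtain ⟨T, hT0, hT⟩ := hunif ε hε
    refine ⟨T, hT0, ?_⟩
    have key : ∀ n : ℕ, ∀ u : ℝ, 0 ≤ u → u ≤ n + 1 → ∀ t, T ≤ t →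
        |f (t + u) - f t - β * u| ≤ ε * (n + 1) := by
      intro n
      induction n with
      | zero =>
        intro u hu0 hu1 t ht
        simpa using hT t ht u hu0 (by simpa using hu1)
      | succ n ih =>
        intro u hu0 hu1 t ht
        by_cases hcase : u ≤ n + 1
        · calc |f (t + u) - f t - β * u| ≤ ε * (n + 1) := ih u hu0 hcase t ht
            _ ≤ ε * (n + 1 + 1) := by nlinarith
            _ = ε * ((n:ℕ).succ + 1) := by push_cast; ring
        · push_neg at hcase
          have hu1' : 0 ≤ u - 1 := by
            have : (0:ℝ) ≤ (n:ℝ) := Nat.cast_nonneg n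
            linarith
          have h1 := ih (u - 1) hu1' (by push_cast at hu1 ⊢; linarith) (t + 1)
            (by linarith)
          have h2 := hT t ht 1 zero_le_one le_rfl
          have heq : t + 1 + (u - 1) = t + u := by ring
          rw [heq] at h1
          have : f (t + u) - f t - β * u =
            (f (t + u) - f (t + 1) - β * (u - 1)) + (f (t + 1) - f t - β * 1) := by ring
          rw [this]
          calc |_ + _| ≤ |f (t + u) - f (t + 1) - β * (u - 1)| + |f (t + 1) - f t - β * 1| :=
              abs_add_le _ _
            _ ≤ ε * (n + 1) + ε := by exact add_le_add h1 h2
            _ = ε * ((n:ℕ).succ + 1) := by push_cast; ring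
    intro t ht u hu0
    have h1 := key ⌊u⌋₊ u hu0 (le_of_lt (Nat.lt_floor_add_one u)) t ht
    calc |f (t + u) - f t - β * u| ≤ ε * (⌊u⌋₊ + 1) := h1
      _ ≤ ε * (u + 1) := by
          have := Nat.floor_le hu0
          nlinarith
  obtain ⟨T, hT0, hT⟩ := hchain
  refine ⟨Real.exp T, Real.one_le_exp hT0, ?_⟩
  intro x hx l hl
  have hxpos : (0:ℝ) < x := lt_of_lt_of_le (Real.exp_pos T) hx
  have hlpos : (0:ℝ) < l := lt_of_lt_of_le one_pos hl
  set t : ℝ := Real.log x with htdef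
  set u : ℝ := Real.log l with hudef
  have htT : T ≤ t := by
    rw [htdef, ← Real.log_exp T]
    exact Real.log_le_log (Real.exp_pos T) hx
  have hu0 : 0 ≤ u := Real.log_nonneg hl
  have hexp_t : Real.exp t = x := Real.exp_log hxpos
  have hexp_u : Real.exp u = l := Real.exp_log hlpos
  have hexp_tu : Real.exp (t + u) = l * x := by rw [Real.exp_add, hexp_t, hexp_u]; ring
  have hb := hT t htT u hu0
  have hfx : f t = Real.log (ψ x) := by rw [hfdef]; simp only; rw [hexp_t]
  have hflx : f (t + u) = Real.log (ψ (l * x)) := by rw [hfdef]; simp only; rw [hexp_tu]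
  rw [hfx, hflx] at hb
  rw [abs_le] at hb
  have hψx : 0 < ψ x := hpos x hxpos.ne'
  have hψlx : 0 < ψ (l * x) := hpos _ (by positivity)
  have hrpow : ∀ c : ℝ, l ^ c = Real.exp (c * u) := by
    intro c
    rw [Real.rpow_def_of_pos hlpos, hudef]; ring_nf
  constructor
  · have h1 : Real.log (ψ x) + (β * u - ε * (u + 1)) ≤ Real.log (ψ (l * x)) := by
      linarith [hb.1]
    have h2 : Real.exp (Real.log (ψ x) + (β * u - ε * (u + 1))) ≤ ψ (l * x) := by
      calc Real.exp (Real.log (ψ x) + (β * u - ε * (u + 1)))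
          ≤ Real.exp (Real.log (ψ (l * x))) := Real.exp_le_exp.2 h1
        _ = ψ (l * x) := Real.exp_log hψlx
    calc Real.exp (-ε) * l ^ (β - ε) * ψ x
        = Real.exp (Real.log (ψ x) + (β * u - ε * (u + 1))) := by
          rw [hrpow (β - ε), Real.exp_add, Real.exp_log hψx, ← Real.exp_add, mul_comm]
          congr 1
          ring
      _ ≤ ψ (l * x) := h2
  · have h1 : Real.log (ψ (l * x)) ≤ Real.log (ψ x) + (β * u + ε * (u + 1)) := by
      linarith [hb.2]
    calc ψ (l * x) = Real.exp (Real.log (ψ (l * x))) := (Real.exp_log hψlx).symm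
      _ ≤ Real.exp (Real.log (ψ x) + (β * u + ε * (u + 1))) := Real.exp_le_exp.2 h1
      _ = Real.exp ε * l ^ (β + ε) * ψ x := by
          rw [hrpow (β + ε), Real.exp_add, Real.exp_log hψx, ← Real.exp_add, mul_comm]
          congr 1
          ring

section Aux

variable (β : ℝ) (ψ : ℝ → ℝ)

lemma aux_setup
    (hβ1 : 1 < β) (hβ2 : β ≤ 2)
    (hnonneg : ∀ p : ℝ, 0 ≤ ψ p)
    (hpos : ∀ p : ℝ, p ≠ 0 → 0 < ψ p)
    (hdiff1 : ∀ p : ℝ, 0 < p → DifferentiableAt ℝ ψ p)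
    (hliminf : 0 < Filter.liminf (fun p : ℝ => ψ p / p ^ 2) (nhdsWithin (0:ℝ) ({0}ᶜ))) :
    ∃ c₂ : ℝ, 0 < c₂ ∧ ∃ δ : ℝ, 0 < δ ∧ δ ≤ 1 ∧
      (∀ p : ℝ, 0 < p → p ≤ δ → c₂ * p ^ 2 ≤ ψ p) := by
  set L := Filter.liminf (fun p : ℝ => ψ p / p ^ 2) (nhdsWithin (0:ℝ) ({0}ᶜ)) with hL
  have hbdd : Filter.IsBoundedUnder (· ≥ ·) (nhdsWithin (0:ℝ) ({0}ᶜ))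
      (fun p : ℝ => ψ p / p ^ 2) :=
    ⟨0, Filter.eventually_map.2 (Filter.Eventually.of_forall fun p =>
      div_nonneg (hnonneg p) (sq_nonneg p))⟩
  have hev := Filter.eventually_lt_of_lt_liminf (half_lt_self hliminf) hbdd
  rw [Filter.eventually_iff, Metric.mem_nhdsWithin_iff] at hev
  obtain ⟨δ', hδ'pos, hδ'⟩ := hev
  refine ⟨L / 2, half_pos hliminf, min (δ' / 2) 1, by positivity, min_le_right _ _, ?_⟩
  intro p hp0 hpδ
  have hpne : p ≠ 0 := hp0.ne'
  have hdist : dist p 0 < δ' := by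
    rw [Real.dist_eq, sub_zero, abs_of_pos hp0]
    have h1 : p ≤ δ' / 2 := le_trans hpδ (min_le_left _ _)
    linarith
  have hmem : p ∈ Metric.ball (0:ℝ) δ' ∩ ({0}ᶜ : Set ℝ) :=
    ⟨by simpa [Metric.mem_ball] using hdist, by simpa using hpne⟩
  have hlt : L / 2 < ψ p / p ^ 2 := hδ' hmem
  have hp2 : (0:ℝ) < p ^ 2 := by positivity
  rw [lt_div_iff₀ hp2] at hlt
  linarith

end Aux

lemma expval {c : ℝ} (hc : 0 < c) :
    (∫ s in Set.Ioi (0:ℝ), Real.exp (-s * c)) = 1 / c := by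
  have h := MeasureTheory.integral_comp_mul_left_Ioi (fun u => Real.exp (-u)) 0 hc
  rw [mul_zero, integral_exp_neg_Ioi, neg_zero, Real.exp_zero] at h
  calc (∫ s in Set.Ioi (0:ℝ), Real.exp (-s * c))
      = ∫ s in Set.Ioi (0:ℝ), Real.exp (-(c * s)) := by
        apply MeasureTheory.setIntegral_congr_fun measurableSet_Ioi
        intro s _
        ring_nf
    _ = c⁻¹ • (1:ℝ) := h
    _ = 1 / c := by rw [smul_eq_mul, mul_one, one_div]

lemma expint {c : ℝ} (hc : 0 < c) :
    MeasureTheory.IntegrableOn (fun s : ℝ => Real.exp (-s * c)) (Set.Ioi (0:ℝ)) := by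
  have := exp_neg_integrableOn_Ioi 0 hc
  apply this.congr_fun _ measurableSet_Ioi
  intro s _
  ring_nf

lemma exp_psi_integrable (ψ : ℝ → ℝ) (hmeas : Measurable ψ)
    (hnonneg : ∀ p : ℝ, 0 ≤ ψ p)
    (X : ℝ) (hXpos : 0 < X) (cX : ℝ) (hcX : 0 < cX)
    (hglob1 : ∀ p : ℝ, X ≤ p → cX * p ≤ ψ p)
    {s : ℝ} (hs : 0 < s) :
    MeasureTheory.IntegrableOn (fun p : ℝ => Real.exp (-s * ψ p)) (Set.Ioi (0:ℝ)) := by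
  have hsplit : Set.Ioi (0:ℝ) = Set.Ioc 0 X ∪ Set.Ioi X := (Set.Ioc_union_Ioi_eq_Ioi hXpos.le).symm
  rw [hsplit]
  have hm' : Measurable fun p : ℝ => Real.exp (-s * ψ p) := by
    have : (fun p : ℝ => Real.exp (-s * ψ p)) = (fun p : ℝ => Real.exp ((-s) * ψ p)) := by
      funext p; ring_nf
    rw [this]
    exact Real.measurable_exp.comp (hmeas.const_mul (-s))
  apply MeasureTheory.IntegrableOn.union
  · apply MeasureTheory.Measure.integrableOn_of_bounded (M := 1) measure_Ioc_lt_top.ne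
      hm'.aestronglyMeasurable
    filter_upwards with p
    rw [Real.norm_eq_abs, abs_of_pos (Real.exp_pos _)]
    rw [Real.exp_le_one_iff]
    have := hnonneg p
    nlinarith
  · apply MeasureTheory.Integrable.mono' (g := fun p : ℝ => Real.exp (-(s * cX) * p))
      ((exp_neg_integrableOn_Ioi X (mul_pos hs hcX)))
      hm'.aestronglyMeasurable
    filter_upwards [MeasureTheory.ae_restrict_mem measurableSet_Ioi] with p hp
    rw [Real.norm_eq_abs, abs_of_pos (Real.exp_pos _), Real.exp_le_exp]
    have h1 : cX * p ≤ ψ p := hglob1 p (le_of_lt hp)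
    nlinarith

lemma one_sub_cos_nonneg (x : ℝ) : 0 ≤ 1 - Real.cos x := by
  linarith [Real.cos_le_one x]

lemma one_sub_cos_le_two (x : ℝ) : 1 - Real.cos x ≤ 2 := by
  linarith [Real.neg_one_le_cos x]

lemma one_sub_cos_eq (x : ℝ) : 1 - Real.cos x = 2 * Real.sin (x / 2) ^ 2 := by
  have h2 := Real.sin_sq_eq_half_sub (x / 2)
  rw [show 2 * (x / 2) = x by ring] at h2
  linarith

lemma one_sub_cos_le_sq (x : ℝ) : 1 - Real.cos x ≤ x ^ 2 / 2 := by
  have h1 : Real.sin (x / 2) ^ 2 ≤ (x / 2) ^ 2 := Real.sin_sq_le_sq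
  have h2 := one_sub_cos_eq x
  nlinarith

lemma g_integrable (ψ : ℝ → ℝ) (hmeas : Measurable ψ)
    (hnonneg : ∀ p : ℝ, 0 ≤ ψ p) (hpos : ∀ p : ℝ, p ≠ 0 → 0 < ψ p)
    (X : ℝ) (hX1 : 1 ≤ X)
    (βm : ℝ) (hβm : 1 < βm)
    (cX : ℝ) (hcX : 0 < cX) (hglob : ∀ p : ℝ, X ≤ p → cX * p ^ βm ≤ ψ p)
    (c₂ : ℝ) (hc₂ : 0 < c₂) (δ : ℝ) (hδ0 : 0 < δ) (hδ1 : δ ≤ 1)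
    (hδ : ∀ p : ℝ, 0 < p → p ≤ δ → c₂ * p ^ 2 ≤ ψ p)
    (m : ℝ) (hm : 0 < m) (hmin : ∀ p ∈ Set.Icc δ X, m ≤ ψ p)
    (h : ℝ) :
    MeasureTheory.IntegrableOn (fun p : ℝ => (1 - Real.cos (p * h)) / ψ p) (Set.Ioi (0:ℝ)) := by
  have hXpos : (0:ℝ) < X := lt_of_lt_of_le one_pos hX1
  have hmg : Measurable fun p : ℝ => (1 - Real.cos (p * h)) / ψ p := by
    apply Measurable.div
    · exact measurable_const.sub (Real.measurable_cos.comp (measurable_id.mul_const h))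
    · exact hmeas
  have hsplit : Set.Ioi (0:ℝ) = Set.Ioc 0 X ∪ Set.Ioi X := (Set.Ioc_union_Ioi_eq_Ioi hXpos.le).symm
  rw [hsplit]
  apply MeasureTheory.IntegrableOn.union
  · apply MeasureTheory.Measure.integrableOn_of_bounded
      (M := max (h ^ 2 / (2 * c₂)) (2 / m)) measure_Ioc_lt_top.ne hmg.aestronglyMeasurable
    filter_upwards [MeasureTheory.ae_restrict_mem measurableSet_Ioc] with p hp
    obtain ⟨hp0, hpX⟩ := hp
    have hψp : 0 < ψ p := hpos p hp0.ne'
    rw [Real.norm_eq_abs, abs_of_nonneg (div_nonneg (one_sub_cos_nonneg _) hψp.le)]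
    by_cases hcase : p ≤ δ
    · refine le_trans ?_ (le_max_left _ _)
      rw [div_le_div_iff₀ hψp (by positivity)]
      have h1 : 1 - Real.cos (p * h) ≤ (p * h) ^ 2 / 2 := one_sub_cos_le_sq _
      have h2 : c₂ * p ^ 2 ≤ ψ p := hδ p hp0 hcase
      nlinarith [one_sub_cos_nonneg (p * h), sq_nonneg (p * h), sq_nonneg p, sq_nonneg h]
    · push_neg at hcase
      refine le_trans ?_ (le_max_right _ _)
      rw [div_le_div_iff₀ hψp hm]
      have h2 : m ≤ ψ p := hmin p ⟨hcase.le, hpX⟩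
      nlinarith [one_sub_cos_le_two (p * h), one_sub_cos_nonneg (p * h)]
  · apply MeasureTheory.Integrable.mono' (g := fun p : ℝ => (2 / cX) * p ^ (-βm))
      (((integrableOn_Ioi_rpow_of_lt (by linarith) hXpos).const_mul _))
      hmg.aestronglyMeasurable
    filter_upwards [MeasureTheory.ae_restrict_mem measurableSet_Ioi] with p hp
    have hppos : 0 < p := lt_trans hXpos hp
    have hψp : 0 < ψ p := hpos p hppos.ne'
    have hψlb : cX * p ^ βm ≤ ψ p := hglob p hp.le
    have hrp : (0:ℝ) < p ^ βm := Real.rpow_pos_of_pos hppos _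
    rw [Real.norm_eq_abs, abs_of_nonneg (div_nonneg (one_sub_cos_nonneg _) hψp.le)]
    rw [Real.rpow_neg hppos.le]
    calc (1 - Real.cos (p * h)) / ψ p ≤ 2 / (cX * p ^ βm) := by
          rw [div_le_div_iff₀ hψp (by positivity)]
          nlinarith [one_sub_cos_le_two (p * h), one_sub_cos_nonneg (p * h)]
      _ = 2 / cX * (p ^ βm)⁻¹ := by
          rw [div_mul_eq_div_div, div_eq_mul_inv (2 / cX)]

noncomputable def Kfun (ψ : ℝ → ℝ) (h : ℝ) : ℝ × ℝ → ℝ :=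
  fun z => (1 - Real.cos (z.2 * h)) * Real.exp (-z.1 * ψ z.2)

lemma Kfun_apply (ψ : ℝ → ℝ) (h s p : ℝ) :
    Kfun ψ h (s, p) = (1 - Real.cos (p * h)) * Real.exp (-s * ψ p) := rfl

lemma part1_lemma (ψ : ℝ → ℝ) (hmeas : Measurable ψ)
    (hnonneg : ∀ p : ℝ, 0 ≤ ψ p) (hpos : ∀ p : ℝ, p ≠ 0 → 0 < ψ p)
    (X : ℝ) (hX1 : 1 ≤ X)
    (βm : ℝ) (hβm : 1 < βm)
    (cX : ℝ) (hcX : 0 < cX)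
    (hglob : ∀ p : ℝ, X ≤ p → cX * p ^ βm ≤ ψ p)
    (hglob1 : ∀ p : ℝ, X ≤ p → cX * p ≤ ψ p)
    (c₂ : ℝ) (hc₂ : 0 < c₂) (δ : ℝ) (hδ0 : 0 < δ) (hδ1 : δ ≤ 1)
    (hδ : ∀ p : ℝ, 0 < p → p ≤ δ → c₂ * p ^ 2 ≤ ψ p)
    (m : ℝ) (hm : 0 < m) (hmin : ∀ p ∈ Set.Icc δ X, m ≤ ψ p)
    (h : ℝ) :
    MeasureTheory.IntegrableOn (fun s => pdens ψ s 0 - pdens ψ s h) (Set.Ioi (0:ℝ)) ∧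
    (∫ s in Set.Ioi (0:ℝ), (pdens ψ s 0 - pdens ψ s h))
      = (1 / Real.pi) * ∫ p in Set.Ioi (0:ℝ), (1 - Real.cos (p * h)) / ψ p := by
  have hXpos : (0:ℝ) < X := lt_of_lt_of_le one_pos hX1
  have hμ : True := trivial
  let μ := MeasureTheory.volume.restrict (Set.Ioi (0:ℝ))
  let Kf : ℝ × ℝ → ℝ := Kfun ψ h
  have hKmeas : Measurable Kf := by
    unfold Kf
    unfold Kfun
    apply Measurable.mul
    · exact measurable_const.sub (Real.measurable_cos.comp (measurable_snd.mul_const h))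
    · exact Real.measurable_exp.comp (measurable_fst.neg.mul (hmeas.comp measurable_snd))
  have hsect : ∀ p : ℝ, 0 < p → MeasureTheory.Integrable (fun s => Kf (s, p)) μ := by
    intro p hp
    have := (expint (hpos p hp.ne')).const_mul (1 - Real.cos (p * h))
    exact this
  have hinner : ∀ p : ℝ, 0 < p →
      (∫ s, Kf (s, p) ∂μ) = (1 - Real.cos (p * h)) / ψ p := by
    intro p hp
    have hψp : 0 < ψ p := hpos p hp.ne'
    calc (∫ s, Kf (s, p) ∂μ)
        = (1 - Real.cos (p * h)) * ∫ s, Real.exp (-s * ψ p) ∂μ := by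
          simp only [Kf, Kfun_apply]
          rw [MeasureTheory.integral_const_mul]
      _ = (1 - Real.cos (p * h)) * (1 / ψ p) := by rw [expval hψp]
      _ = (1 - Real.cos (p * h)) / ψ p := by rw [mul_one_div]
  have hKnonneg : ∀ z : ℝ × ℝ, 0 ≤ Kf z := fun z =>
    mul_nonneg (one_sub_cos_nonneg _) (Real.exp_pos _).le
  have hnormeq : (fun p => ∫ s, ‖Kf (s, p)‖ ∂μ)
      =ᵐ[μ] fun p => (1 - Real.cos (p * h)) / ψ p := by
    filter_upwards [MeasureTheory.ae_restrict_mem measurableSet_Ioi] with p hp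
    have : (fun s => ‖Kf (s, p)‖) = fun s => Kf (s, p) := by
      funext s; exact norm_of_nonneg (hKnonneg _)
    rw [this, hinner p hp]
  have hgint := g_integrable ψ hmeas hnonneg hpos X hX1 βm hβm cX hcX hglob
    c₂ hc₂ δ hδ0 hδ1 hδ m hm hmin h
  have hKint : MeasureTheory.Integrable Kf (μ.prod μ) := by
    rw [MeasureTheory.integrable_prod_iff' hKmeas.aestronglyMeasurable]
    constructor
    · filter_upwards [MeasureTheory.ae_restrict_mem measurableSet_Ioi] with p hp
      exact hsect p hp
    · exact hgint.congr hnormeq.symm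
  have hKint' : MeasureTheory.Integrable (Function.uncurry fun s p => Kf (s, p)) (μ.prod μ) := by
    exact hKint
  have hswap := MeasureTheory.integral_integral_swap hKint'
  -- pdens identity
  have hcosint : ∀ s : ℝ, 0 < s → ∀ x : ℝ,
      MeasureTheory.Integrable (fun p => Real.cos (p * x) * Real.exp (-s * ψ p)) μ := by
    intro s hs x
    apply MeasureTheory.Integrable.mono'
      (exp_psi_integrable ψ hmeas hnonneg X hXpos cX hcX hglob1 hs)
    · apply Measurable.aestronglyMeasurable
      apply Measurable.mul
      · exact Real.measurable_cos.comp (measurable_id.mul_const x)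
      · have : (fun p : ℝ => Real.exp (-s * ψ p)) = fun p : ℝ => Real.exp ((-s) * ψ p) := by
          funext p; ring_nf
        rw [this]
        exact Real.measurable_exp.comp (hmeas.const_mul (-s))
    · filter_upwards with p
      rw [Real.norm_eq_abs, abs_mul, abs_of_pos (Real.exp_pos _)]
      have h1 : |Real.cos (p * x)| ≤ 1 := Real.abs_cos_le_one _
      nlinarith [Real.exp_pos (-s * ψ p)]
  have hpdens_eq : ∀ s : ℝ, 0 < s →
      pdens ψ s 0 - pdens ψ s h = (1 / Real.pi) * ∫ p, Kf (s, p) ∂μ := by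
    intro s hs
    unfold pdens
    rw [← mul_sub]
    congr 1
    rw [← MeasureTheory.integral_sub (hcosint s hs 0) (hcosint s hs h)]
    apply MeasureTheory.integral_congr_ae
    filter_upwards with p
    simp only [Kf, Kfun_apply, mul_zero, Real.cos_zero, one_mul]
    ring
  have hInts : MeasureTheory.Integrable (fun s => ∫ p, Kf (s, p) ∂μ) μ :=
    hKint.integral_prod_left
  have haeeq : (fun s => (1 / Real.pi) * ∫ p, Kf (s, p) ∂μ)
      =ᵐ[μ] fun s => pdens ψ s 0 - pdens ψ s h := by
    filter_upwards [MeasureTheory.ae_restrict_mem measurableSet_Ioi] with s hs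
    exact (hpdens_eq s hs).symm
  constructor
  · exact (hInts.const_mul (1 / Real.pi)).congr haeeq
  · calc (∫ s in Set.Ioi (0:ℝ), (pdens ψ s 0 - pdens ψ s h))
        = ∫ s, (1 / Real.pi) * ∫ p, Kf (s, p) ∂μ ∂μ :=
          (MeasureTheory.integral_congr_ae haeeq).symm
      _ = (1 / Real.pi) * ∫ s, ∫ p, Kf (s, p) ∂μ ∂μ := by
          rw [MeasureTheory.integral_const_mul]
      _ = (1 / Real.pi) * ∫ p, ∫ s, Kf (s, p) ∂μ ∂μ := by rw [hswap]
      _ = (1 / Real.pi) * ∫ p in Set.Ioi (0:ℝ), (1 - Real.cos (p * h)) / ψ p := by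
          congr 1
          apply MeasureTheory.integral_congr_ae
          filter_upwards [MeasureTheory.ae_restrict_mem measurableSet_Ioi] with p hp
          exact hinner p hp

noncomputable def Ffun (ψ : ℝ → ℝ) (h q : ℝ) : ℝ :=
  (1 - Real.cos q) * (ψ (1 / h) / ψ (q / h))

lemma rescale (ψ : ℝ → ℝ) {h : ℝ} (hh : 0 < h) :
    h * ψ (1 / h) * ((1 / Real.pi) * ∫ p in Set.Ioi (0:ℝ), (1 - Real.cos (p * h)) / ψ p)
      = (1 / Real.pi) * ∫ q in Set.Ioi (0:ℝ), Ffun ψ h q := by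
  have hcv := MeasureTheory.integral_comp_mul_left_Ioi
    (fun p => (1 - Real.cos (p * h)) / ψ p) 0 (b := 1 / h) (by positivity)
  rw [mul_zero] at hcv
  have hkey : ∀ q : ℝ, (1 - Real.cos (1 / h * q * h)) / ψ (1 / h * q) = (1 - Real.cos q) / ψ (q / h) := by
    intro q
    have h1 : 1 / h * q * h = q := by field_simp
    have h2 : 1 / h * q = q / h := by field_simp
    rw [h1, h2]
  have hcv2 : (∫ q in Set.Ioi (0:ℝ), (1 - Real.cos q) / ψ (q / h))
      = h * ∫ p in Set.Ioi (0:ℝ), (1 - Real.cos (p * h)) / ψ p := by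
    rw [show (1 / h)⁻¹ = h by simp, smul_eq_mul] at hcv
    rw [← hcv]
    apply MeasureTheory.setIntegral_congr_fun measurableSet_Ioi
    intro q _
    exact (hkey q).symm
  have hπ : Real.pi ≠ 0 := Real.pi_ne_zero
  calc h * ψ (1 / h) * ((1 / Real.pi) * ∫ p in Set.Ioi (0:ℝ), (1 - Real.cos (p * h)) / ψ p)
      = (1 / Real.pi) * (ψ (1 / h) * (h * ∫ p in Set.Ioi (0:ℝ), (1 - Real.cos (p * h)) / ψ p)) := by
        ring
    _ = (1 / Real.pi) * (ψ (1 / h) * ∫ q in Set.Ioi (0:ℝ), (1 - Real.cos q) / ψ (q / h)) := by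
        rw [hcv2]
    _ = (1 / Real.pi) * ∫ q in Set.Ioi (0:ℝ), Ffun ψ h q := by
        congr 1
        rw [← MeasureTheory.integral_const_mul]
        apply MeasureTheory.setIntegral_congr_fun measurableSet_Ioi
        intro q _
        unfold Ffun
        ring

set_option maxHeartbeats 1000000 in
lemma part2_dct (β : ℝ) (hβ1 : 1 < β) (ψ : ℝ → ℝ) (hmeas : Measurable ψ)
    (hnonneg : ∀ p : ℝ, 0 ≤ ψ p) (hpos : ∀ p : ℝ, p ≠ 0 → 0 < ψ p)
    (hRV : ∀ l : ℝ, 0 < l →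
      Filter.Tendsto (fun x => ψ (l * x) / ψ x) Filter.atTop (nhds (l ^ β)))
    (ε : ℝ) (hε : 0 < ε)
    (hβm : 1 < β - ε) (hβp : -1 < 2 - (β + ε))
    (X : ℝ) (hX1 : 1 ≤ X)
    (hpot : ∀ x, X ≤ x → ∀ l, 1 ≤ l →
      Real.exp (-ε) * l ^ (β - ε) * ψ x ≤ ψ (l * x) ∧
      ψ (l * x) ≤ Real.exp ε * l ^ (β + ε) * ψ x)
    (c₂ : ℝ) (hc₂ : 0 < c₂) (δ : ℝ) (hδ0 : 0 < δ) (hδ1 : δ ≤ 1)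
    (hδ : ∀ p : ℝ, 0 < p → p ≤ δ → c₂ * p ^ 2 ≤ ψ p)
    (m : ℝ) (hm : 0 < m) (hmin : ∀ p ∈ Set.Icc δ X, m ≤ ψ p)
    (C₀ : ℝ) (hC0 : ∀ p : ℝ, ψ p ≤ C₀ * p ^ 2) :
    Filter.Tendsto (fun h : ℝ => ∫ q in Set.Ioi (0:ℝ), Ffun ψ h q)
      (nhdsWithin (0:ℝ) (Set.Ioi 0))
      (nhds (∫ q in Set.Ioi (0:ℝ), (1 - Real.cos q) / q ^ β)) := by
  have hXpos : (0:ℝ) < X := lt_of_lt_of_le one_pos hX1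
  have hC₀ : 0 < C₀ := lt_of_lt_of_le (hpos 1 one_ne_zero) (by simpa using hC0 1)
  have hexpε : 0 < Real.exp ε := Real.exp_pos ε
  set βm : ℝ := β - ε with hβmdef
  set βp : ℝ := β + ε with hβpdef
  obtain ⟨Kb, hKbdef⟩ : ∃ Kb : ℝ, Kb = 2 * Real.exp ε + Real.exp ε / 2 + C₀ / (2 * c₂)
      + C₀ * X ^ 2 / (2 * m) + 1 := ⟨_, rfl⟩
  have hKb_pieces : 2 * Real.exp ε ≤ Kb ∧ Real.exp ε / 2 ≤ Kb ∧ C₀ / (2 * c₂) ≤ Kb ∧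
      C₀ * X ^ 2 / (2 * m) ≤ Kb ∧ 0 < Kb := by
    have h1 : 0 < C₀ / (2 * c₂) := by positivity
    have h2 : 0 < C₀ * X ^ 2 / (2 * m) := by positivity
    rw [hKbdef]
    refine ⟨by linarith, by linarith, by linarith, by linarith, by linarith⟩
  set bound : ℝ → ℝ := fun q => if q ≤ 1 then Kb * q ^ (2 - βp) + Kb else Kb * q ^ (-βm)
    with hbounddef
  apply MeasureTheory.tendsto_integral_filter_of_dominated_convergence bound
  · -- measurability
    apply Filter.Eventually.of_forall
    intro h
    apply Measurable.aestronglyMeasurable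
    unfold Ffun
    exact (measurable_const.sub Real.measurable_cos).mul
      (measurable_const.div (hmeas.comp (measurable_id.div_const h)))
  · -- bound
    have hmem : Set.Ioo (0:ℝ) (1 / X) ∈ nhdsWithin (0:ℝ) (Set.Ioi 0) :=
      Ioo_mem_nhdsGT_of_mem ⟨le_rfl, by positivity⟩
    filter_upwards [hmem] with h hh
    obtain ⟨hh0, hhX⟩ := hh
    filter_upwards [MeasureTheory.ae_restrict_mem measurableSet_Ioi] with q hq
    have hq0 : (0:ℝ) < q := hq
    have hyX : X ≤ 1 / h := by
      rw [lt_div_iff₀ hXpos] at hhX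
      rw [le_div_iff₀ hh0]
      nlinarith
    have hy0 : (0:ℝ) < 1 / h := by positivity
    have hqh0 : (0:ℝ) < q / h := by positivity
    have hψy : 0 < ψ (1 / h) := hpos _ hy0.ne'
    have hψqh : 0 < ψ (q / h) := hpos _ hqh0.ne'
    have hFnn : 0 ≤ Ffun ψ h q :=
      mul_nonneg (one_sub_cos_nonneg q) (div_nonneg hψy.le hψqh.le)
    rw [Real.norm_eq_abs, abs_of_nonneg hFnn]
    by_cases hq1 : q ≤ 1
    · -- small q
      rw [hbounddef]
      simp only [if_pos hq1]
      have hq2p : (0:ℝ) < q ^ (2 - βp) := Real.rpow_pos_of_pos hq0 _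
      have hFle : Ffun ψ h q ≤ Kb * q ^ (2 - βp) + Kb := by
        by_cases hqa : X ≤ q / h
        · -- potter upper
          have h1q : (1:ℝ) ≤ 1 / q := one_le_one_div hq0 hq1
          have hup := (hpot (q / h) hqa (1 / q) h1q).2
          have hid : 1 / q * (q / h) = 1 / h := by field_simp
          rw [hid] at hup
          have hrw : (1 / q) ^ βp = q ^ (-βp) := by
            rw [one_div, Real.rpow_neg hq0.le, Real.inv_rpow hq0.le]
          rw [hrw] at hup
          have hratio : ψ (1 / h) / ψ (q / h) ≤ Real.exp ε * q ^ (-βp) := by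
            rw [div_le_iff₀ hψqh]
            calc ψ (1 / h) ≤ Real.exp ε * q ^ (-βp) * ψ (q / h) := hup
              _ = Real.exp ε * q ^ (-βp) * ψ (q / h) := rfl
          have hstep : Ffun ψ h q ≤ q ^ 2 / 2 * (Real.exp ε * q ^ (-βp)) := by
            unfold Ffun
            apply mul_le_mul (one_sub_cos_le_sq q) hratio
              (div_nonneg hψy.le hψqh.le) (by positivity)
          have heq : q ^ 2 / 2 * (Real.exp ε * q ^ (-βp)) =
              Real.exp ε / 2 * q ^ (2 - βp) := by
            rw [show (2:ℝ) - βp = 2 + -βp by ring, Real.rpow_add hq0, Real.rpow_two]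
            ring
          rw [heq] at hstep
          have : Real.exp ε / 2 * q ^ (2 - βp) ≤ Kb * q ^ (2 - βp) :=
            mul_le_mul_of_nonneg_right hKb_pieces.2.1 hq2p.le
          linarith [hKb_pieces.2.2.2.2]
        · push_neg at hqa
          have hqhle : q / h ≤ X := hqa.le
          have hFle2 : Ffun ψ h q ≤ Kb := by
            by_cases hqb : q / h ≤ δ
            · -- quadratic regime
              have hlow2 : c₂ * (q / h) ^ 2 ≤ ψ (q / h) := hδ _ hqh0 hqb
              have hupC : ψ (1 / h) ≤ C₀ * (1 / h) ^ 2 := hC0 _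
              have key : Ffun ψ h q ≤ C₀ / (2 * c₂) := by
                unfold Ffun
                rw [show (1 - Real.cos q) * (ψ (1 / h) / ψ (q / h))
                  = ((1 - Real.cos q) * ψ (1 / h)) / ψ (q / h) from by ring,
                  div_le_iff₀ hψqh]
                calc (1 - Real.cos q) * ψ (1 / h)
                    ≤ q ^ 2 / 2 * (C₀ * (1 / h) ^ 2) :=
                      mul_le_mul (one_sub_cos_le_sq q) hupC (hnonneg _) (by positivity)
                  _ = C₀ / (2 * c₂) * (c₂ * (q / h) ^ 2) := by
                      field_simp
                  _ ≤ C₀ / (2 * c₂) * ψ (q / h) := by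
                      apply mul_le_mul_of_nonneg_left hlow2 (by positivity)
              exact le_trans key hKb_pieces.2.2.1
            · push_neg at hqb
              have hlow3 : m ≤ ψ (q / h) := hmin _ ⟨hqb.le, hqhle⟩
              have hyq : 1 / h ≤ X / q := by
                rw [div_le_div_iff₀ hh0 hq0]
                rw [div_le_iff₀ hh0] at hqhle
                nlinarith
              have hupC2 : ψ (1 / h) ≤ C₀ * (X / q) ^ 2 := by
                calc ψ (1 / h) ≤ C₀ * (1 / h) ^ 2 := hC0 _
                  _ ≤ C₀ * (X / q) ^ 2 := by
                      apply mul_le_mul_of_nonneg_left _ hC₀.le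
                      apply pow_le_pow_left₀ hy0.le hyq
              have key : Ffun ψ h q ≤ C₀ * X ^ 2 / (2 * m) := by
                unfold Ffun
                rw [show (1 - Real.cos q) * (ψ (1 / h) / ψ (q / h))
                  = ((1 - Real.cos q) * ψ (1 / h)) / ψ (q / h) from by ring,
                  div_le_iff₀ hψqh]
                calc (1 - Real.cos q) * ψ (1 / h)
                    ≤ q ^ 2 / 2 * (C₀ * (X / q) ^ 2) :=
                      mul_le_mul (one_sub_cos_le_sq q) hupC2 (hnonneg _) (by positivity)
                  _ = C₀ * X ^ 2 / (2 * m) * m := by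
                      field_simp
                  _ ≤ C₀ * X ^ 2 / (2 * m) * ψ (q / h) := by
                      apply mul_le_mul_of_nonneg_left hlow3 (by positivity)
              exact le_trans key hKb_pieces.2.2.2.1
          have : 0 ≤ Kb * q ^ (2 - βp) := mul_nonneg hKb_pieces.2.2.2.2.le hq2p.le
          linarith
      exact hFle
    · -- large q
      push_neg at hq1
      rw [hbounddef]
      simp only [if_neg (not_le.2 hq1)]
      have hlow := (hpot (1 / h) hyX q hq1.le).1
      have hid : q * (1 / h) = q / h := by field_simp
      rw [hid] at hlow
      have hqm : (0:ℝ) < q ^ (-βm) := Real.rpow_pos_of_pos hq0 _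
      have hprod : Real.exp ε * q ^ (-βm) * (Real.exp (-ε) * q ^ βm) = 1 := by
        rw [Real.rpow_neg hq0.le, Real.exp_neg]
        field_simp
      have hup2 : ψ (1 / h) ≤ Real.exp ε * q ^ (-βm) * ψ (q / h) := by
        calc ψ (1 / h) = Real.exp ε * q ^ (-βm) * (Real.exp (-ε) * q ^ βm) * ψ (1 / h) := by
              rw [hprod, one_mul]
          _ = Real.exp ε * q ^ (-βm) * (Real.exp (-ε) * q ^ βm * ψ (1 / h)) := by ring
          _ ≤ Real.exp ε * q ^ (-βm) * ψ (q / h) := by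
              apply mul_le_mul_of_nonneg_left hlow (by positivity)
      have hratio : ψ (1 / h) / ψ (q / h) ≤ Real.exp ε * q ^ (-βm) := by
        rw [div_le_iff₀ hψqh]
        exact hup2
      calc Ffun ψ h q ≤ 2 * (Real.exp ε * q ^ (-βm)) := by
            unfold Ffun
            apply mul_le_mul (one_sub_cos_le_two q) hratio
              (div_nonneg hψy.le hψqh.le) (by norm_num)
        _ ≤ Kb * q ^ (-βm) := by
            have := hKb_pieces.1
            nlinarith
  · -- bound integrable
    have hb1 : MeasureTheory.IntegrableOn (fun q : ℝ => Kb * q ^ (2 - βp) + Kb)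
        (Set.Ioc (0:ℝ) 1) := by
      apply MeasureTheory.Integrable.add
      · apply MeasureTheory.Integrable.const_mul
        have := intervalIntegral.intervalIntegrable_rpow' (a := 0) (b := 1) hβp
        rwa [intervalIntegrable_iff_integrableOn_Ioc_of_le zero_le_one] at this
      · exact MeasureTheory.integrableOn_const measure_Ioc_lt_top.ne
    have hb2 : MeasureTheory.IntegrableOn (fun q : ℝ => Kb * q ^ (-βm)) (Set.Ioi (1:ℝ)) :=
      (integrableOn_Ioi_rpow_of_lt (by simp only [hβmdef]; linarith) one_pos).const_mul _
    rw [show Set.Ioi (0:ℝ) = Set.Ioc 0 1 ∪ Set.Ioi 1 from (Set.Ioc_union_Ioi_eq_Ioi zero_le_one).symm]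
    apply MeasureTheory.IntegrableOn.union
    · apply hb1.congr_fun _ measurableSet_Ioc
      intro q hq
      rw [hbounddef]
      simp only [if_pos hq.2]
    · apply hb2.congr_fun _ measurableSet_Ioi
      intro q hq
      rw [hbounddef]
      simp only [if_neg (not_le.2 (Set.mem_Ioi.1 hq))]
  · -- pointwise limit
    filter_upwards [MeasureTheory.ae_restrict_mem measurableSet_Ioi] with q hq
    have hq0 : (0:ℝ) < q := hq
    have hqβ : (0:ℝ) < q ^ β := Real.rpow_pos_of_pos hq0 _
    have h1 : Tendsto (fun x : ℝ => ψ (q * x) / ψ x) atTop (𝓝 (q ^ β)) := hRV q hq0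
    have h2 : Tendsto (fun h : ℝ => h⁻¹) (nhdsWithin (0:ℝ) (Set.Ioi 0)) atTop :=
      tendsto_inv_nhdsGT_zero
    have h3 : Tendsto (fun h : ℝ => ψ (q * h⁻¹) / ψ h⁻¹) (nhdsWithin (0:ℝ) (Set.Ioi 0))
        (𝓝 (q ^ β)) := h1.comp h2
    have h4 : Tendsto (fun h : ℝ => (ψ (q * h⁻¹) / ψ h⁻¹)⁻¹) (nhdsWithin (0:ℝ) (Set.Ioi 0))
        (𝓝 ((q ^ β)⁻¹)) := h3.inv₀ hqβ.ne'
    have h5 : Tendsto (fun h : ℝ => (1 - Real.cos q) * (ψ (q * h⁻¹) / ψ h⁻¹)⁻¹)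
        (nhdsWithin (0:ℝ) (Set.Ioi 0)) (𝓝 ((1 - Real.cos q) * (q ^ β)⁻¹)) :=
      h4.const_mul _
    have h6 : (1 - Real.cos q) * (q ^ β)⁻¹ = (1 - Real.cos q) / q ^ β := by
      rw [div_eq_mul_inv]
    rw [← h6]
    apply h5.congr'
    filter_upwards [self_mem_nhdsWithin] with h hh
    have hh0 : (0:ℝ) < h := hh
    have hy0 : (0:ℝ) < h⁻¹ := by positivity
    have hqy0 : (0:ℝ) < q * h⁻¹ := by positivity
    unfold Ffun
    congr 1
    rw [inv_div, one_div, div_eq_mul_inv q h]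

theorem stmt_18
    (β : ℝ) (hβ1 : 1 < β) (hβ2 : β ≤ 2)
    (ψ : ℝ → ℝ)
    (hmeas : Measurable ψ)
    (heven : ∀ p : ℝ, ψ (-p) = ψ p)
    (hnonneg : ∀ p : ℝ, 0 ≤ ψ p)
    (hpos : ∀ p : ℝ, p ≠ 0 → 0 < ψ p)
    (hRV : ∀ l : ℝ, 0 < l →
      Filter.Tendsto (fun x => ψ (l * x) / ψ x) Filter.atTop (nhds (l ^ β)))
    (hdiff1 : ∀ p : ℝ, 0 < p → DifferentiableAt ℝ ψ p)
    (hdiff2 : ∀ p : ℝ, 0 < p → DifferentiableAt ℝ (deriv ψ) p)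
    (D₁ D₂ : ℝ)
    (hD1 : ∀ l : ℝ, 1 ≤ l → l * |deriv ψ l| ≤ D₁ * ψ l)
    (hD2 : ∀ l : ℝ, 1 ≤ l → l ^ 2 * |deriv (deriv ψ) l| ≤ D₂ * ψ l)
    (hint1 : MeasureTheory.IntegrableOn (fun l : ℝ => (deriv ψ l) ^ 2) (Set.Ioc (0:ℝ) 1))
    (hint2 : MeasureTheory.IntegrableOn (fun l : ℝ => |deriv (deriv ψ) l|) (Set.Ioc (0:ℝ) 1))
    (hint3 : MeasureTheory.IntegrableOn (fun l : ℝ => ψ l / l) (Set.Ioc (0:ℝ) 1))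
    (C₀ : ℝ) (hC0 : ∀ p : ℝ, ψ p ≤ C₀ * p ^ 2)
    (hliminf : 0 < Filter.liminf (fun p : ℝ => ψ p / p ^ 2) (nhdsWithin (0:ℝ) ({0}ᶜ))) :
    (∀ h : ℝ, 0 < h →
      MeasureTheory.IntegrableOn (fun s => pdens ψ s 0 - pdens ψ s h) (Set.Ioi (0:ℝ)) ∧
      (∫ s in Set.Ioi (0:ℝ), (pdens ψ s 0 - pdens ψ s h))
        = (1 / Real.pi) * ∫ p in Set.Ioi (0:ℝ), (1 - Real.cos (p * h)) / ψ p) ∧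
    Filter.Tendsto
      (fun h : ℝ => h * ψ (1 / h) * ∫ s in Set.Ioi (0:ℝ), (pdens ψ s 0 - pdens ψ s h))
      (nhdsWithin (0:ℝ) (Set.Ioi 0))
      (nhds ((2 / Real.pi) * ∫ p in Set.Ioi (0:ℝ), Real.sin (p / 2) ^ 2 / p ^ β)) := by
  have hβ0 : (0:ℝ) ≤ β := by linarith
  have hε : 0 < (β - 1) / 2 := by linarith
  obtain ⟨X, hX1, hpot⟩ := potter_bounds β hβ0 ψ hpos hRV hdiff1 D₁ hD1 ((β - 1) / 2) hε
  have hXpos : (0:ℝ) < X := lt_of_lt_of_le one_pos hX1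
  have hβm : 1 < β - (β - 1) / 2 := by linarith
  have hβp : -1 < 2 - (β + (β - 1) / 2) := by linarith
  obtain ⟨c₂, hc₂, δ, hδ0, hδ1, hδ⟩ := aux_setup β ψ hβ1 hβ2 hnonneg hpos hdiff1 hliminf
  obtain ⟨m, hm, hmin⟩ : ∃ m : ℝ, 0 < m ∧ ∀ p ∈ Set.Icc δ X, m ≤ ψ p := by
    have hne : (Set.Icc δ X).Nonempty := ⟨δ, le_refl δ, by linarith⟩
    have hcont : ContinuousOn ψ (Set.Icc δ X) := fun p hp =>
      ((hdiff1 p (lt_of_lt_of_le hδ0 hp.1)).continuousAt).continuousWithinAt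
    obtain ⟨z, hz, hzmin⟩ := isCompact_Icc.exists_isMinOn hne hcont
    exact ⟨ψ z, hpos z (ne_of_gt (lt_of_lt_of_le hδ0 hz.1)), fun p hp => hzmin hp⟩
  have hψX : 0 < ψ X := hpos X hXpos.ne'
  obtain ⟨cX, hcXdef⟩ : ∃ cX : ℝ,
      cX = Real.exp (-((β - 1) / 2)) * ψ X / X ^ (β - (β - 1) / 2) := ⟨_, rfl⟩
  have hXr : 0 < X ^ (β - (β - 1) / 2) := Real.rpow_pos_of_pos hXpos _
  have hcX : 0 < cX := by
    rw [hcXdef]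
    positivity
  have hglob : ∀ p, X ≤ p → cX * p ^ (β - (β - 1) / 2) ≤ ψ p := by
    intro p hp
    have hppos : 0 < p := lt_of_lt_of_le hXpos hp
    have hl : 1 ≤ p / X := (one_le_div hXpos).2 hp
    have hlow := (hpot X le_rfl (p / X) hl).1
    rw [div_mul_cancel₀ _ hXpos.ne'] at hlow
    have heq : cX * p ^ (β - (β - 1) / 2)
        = Real.exp (-((β - 1) / 2)) * (p / X) ^ (β - (β - 1) / 2) * ψ X := by
      rw [hcXdef, Real.div_rpow hppos.le hXpos.le]
      field_simp
    rw [heq]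
    exact hlow
  have hglob1 : ∀ p, X ≤ p → cX * p ≤ ψ p := by
    intro p hp
    have hppos : 0 < p := lt_of_lt_of_le hXpos hp
    calc cX * p = cX * p ^ (1:ℝ) := by rw [Real.rpow_one]
      _ ≤ cX * p ^ (β - (β - 1) / 2) :=
          mul_le_mul_of_nonneg_left
            (Real.rpow_le_rpow_of_exponent_le (le_trans hX1 hp) (by linarith)) hcX.le
      _ ≤ ψ p := hglob p hp
  have hpart1 := fun (h : ℝ) => part1_lemma ψ hmeas hnonneg hpos X hX1 _ hβm cX hcX hglob
    hglob1 c₂ hc₂ δ hδ0 hδ1 hδ m hm hmin h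
  refine ⟨fun h _ => hpart1 h, ?_⟩
  have hdct := part2_dct β hβ1 ψ hmeas hnonneg hpos hRV ((β - 1) / 2) hε hβm hβp X hX1 hpot
    c₂ hc₂ δ hδ0 hδ1 hδ m hm hmin C₀ hC0
  have htarget := hdct.const_mul (1 / Real.pi)
  have hval : (1 / Real.pi) * (∫ q in Set.Ioi (0:ℝ), (1 - Real.cos q) / q ^ β)
      = (2 / Real.pi) * ∫ p in Set.Ioi (0:ℝ), Real.sin (p / 2) ^ 2 / p ^ β := by
    have hcong : ∀ q ∈ Set.Ioi (0:ℝ), (1 - Real.cos q) / q ^ β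
        = 2 * (Real.sin (q / 2) ^ 2 / q ^ β) := by
      intro q _
      rw [one_sub_cos_eq]
      ring
    calc (1 / Real.pi) * (∫ q in Set.Ioi (0:ℝ), (1 - Real.cos q) / q ^ β)
        = (1 / Real.pi) * ∫ q in Set.Ioi (0:ℝ), 2 * (Real.sin (q / 2) ^ 2 / q ^ β) := by
          rw [MeasureTheory.setIntegral_congr_fun measurableSet_Ioi hcong]
      _ = (1 / Real.pi) * (2 * ∫ q in Set.Ioi (0:ℝ), Real.sin (q / 2) ^ 2 / q ^ β) := by
          rw [MeasureTheory.integral_const_mul]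
      _ = (2 / Real.pi) * ∫ p in Set.Ioi (0:ℝ), Real.sin (p / 2) ^ 2 / p ^ β := by
          ring
  rw [hval] at htarget
  apply htarget.congr'
  filter_upwards [self_mem_nhdsWithin] with h hh
  have hh0 : (0:ℝ) < h := hh
  rw [(hpart1 h).2]
  exact (rescale ψ hh0).symm
end
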